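/- arXiv:2110.11627 — 7 statements merged into one kernel-verified Lean document; each statement's English description precedes it below -/
import Mathlib

section
/- Let ω be a finite Borel measure on ℝ supported in [0, ∞). Define ω' as the measure ω' = ½·(pushforward of ω under λ ↦ √λ) + ½·(pushforward of ω under λ ↦ −√λ). Then ω'(ℝ) = ω(ℝ), and for every z ∈ ℂ with Im z ≠ 0 one has z·∫ 1/(λ − z²) dω(λ) = ∫ 1/(t − z) dω'(t). -/
open MeasureTheory
open scoped ENNReal

lemma aux_ne (z : ℂ) (hz : z.im ≠ 0) (t : ℝ) : ((t : ℂ) - z) ≠ 0 := by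
  intro h
  apply hz
  have := congrArg Complex.im h
  simpa using this.symm

lemma aux_norm (z : ℂ) (hz : z.im ≠ 0) (t : ℝ) :
    ‖1 / ((t : ℂ) - z)‖ ≤ |z.im|⁻¹ := by
  rw [norm_div, norm_one, div_eq_mul_inv, one_mul]
  apply inv_anti₀ (abs_pos.2 hz)
  calc |z.im| = |((t : ℂ) - z).im| := by simp
    _ ≤ ‖(t : ℂ) - z‖ := Complex.abs_im_le_norm _

lemma aux_int (μ : Measure ℝ) [IsFiniteMeasure μ] (z : ℂ) (hz : z.im ≠ 0)
    (g : ℝ → ℝ) (hg : Measurable g) :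
    Integrable (fun t => 1 / ((g t : ℂ) - z)) μ := by
  apply (integrable_const (|z.im|⁻¹)).mono'
  · exact (measurable_const.div ((Complex.measurable_ofReal.comp hg).sub
      measurable_const)).aestronglyMeasurable
  · filter_upwards with t using aux_norm z hz (g t)

/-- Let `ω` be a finite Borel measure on `ℝ` supported in `[0, ∞)`, and let
`ω' = ½·(pushforward of ω by √·) + ½·(pushforward of ω by −√·)`. Then `ω'(ℝ) = ω(ℝ)` and for
every `z ∈ ℂ` with `Im z ≠ 0`, `z·∫ 1/(λ − z²) dω(λ) = ∫ 1/(t − z) dω'(t)`. -/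
theorem stmt2 (ω : Measure ℝ) [IsFiniteMeasure ω] (hsupp : ω (Set.Iio 0) = 0)
    (ω' : Measure ℝ)
    (hω' : ω' = (2⁻¹ : ℝ≥0∞) • Measure.map (fun l : ℝ => Real.sqrt l) ω +
        (2⁻¹ : ℝ≥0∞) • Measure.map (fun l : ℝ => -Real.sqrt l) ω) :
    ω' Set.univ = ω Set.univ ∧
    ∀ z : ℂ, z.im ≠ 0 →
      z * ∫ l : ℝ, 1 / ((l : ℂ) - z ^ 2) ∂ω = ∫ t : ℝ, 1 / ((t : ℂ) - z) ∂ω' := by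
  have hm1 : Measurable (fun l : ℝ => Real.sqrt l) := Real.continuous_sqrt.measurable
  have hm2 : Measurable (fun l : ℝ => -Real.sqrt l) := hm1.neg
  constructor
  · rw [hω']
    simp [Measure.map_apply hm1 MeasurableSet.univ,
      Measure.map_apply hm2 MeasurableSet.univ]
    rw [← add_mul, ENNReal.inv_two_add_inv_two, one_mul]
  · intro z hz
    have hae : ∀ᵐ l ∂ω, 0 ≤ l := by
      rw [ae_iff]
      convert hsupp using 2
      ext l; simp [Set.Iio, not_le]
    -- RHS computation
    have hi1 : Integrable (fun t : ℝ => 1 / ((t : ℂ) - z)) (Measure.map (fun l : ℝ => Real.sqrt l) ω) := by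
      haveI : IsFiniteMeasure (Measure.map (fun l : ℝ => Real.sqrt l) ω) :=
        Measure.isFiniteMeasure_map ω _
      simpa using aux_int (Measure.map (fun l : ℝ => Real.sqrt l) ω) z hz id measurable_id
    have hi2 : Integrable (fun t : ℝ => 1 / ((t : ℂ) - z)) (Measure.map (fun l : ℝ => -Real.sqrt l) ω) := by
      haveI : IsFiniteMeasure (Measure.map (fun l : ℝ => -Real.sqrt l) ω) :=
        Measure.isFiniteMeasure_map ω _
      simpa using aux_int (Measure.map (fun l : ℝ => -Real.sqrt l) ω) z hz id measurable_id
    rw [hω', integral_add_measure (hi1.smul_measure (by norm_num : (2⁻¹ : ℝ≥0∞) ≠ ⊤))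
      (hi2.smul_measure (by norm_num : (2⁻¹ : ℝ≥0∞) ≠ ⊤)),
      integral_smul_measure, integral_smul_measure,
      integral_map hm1.aemeasurable (f := fun t : ℝ => 1 / ((t : ℂ) - z))
        ((measurable_const.div (Complex.measurable_ofReal.sub measurable_const)).aestronglyMeasurable),
      integral_map hm2.aemeasurable (f := fun t : ℝ => 1 / ((t : ℂ) - z))
        ((measurable_const.div (Complex.measurable_ofReal.sub measurable_const)).aestronglyMeasurable)]
    have key : z * ∫ l : ℝ, 1 / ((l : ℂ) - z ^ 2) ∂ω
        = ∫ l : ℝ, z * (1 / ((l : ℂ) - z ^ 2)) ∂ω := (integral_const_mul z _).symm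
    rw [key]
    rw [← integral_smul, ← integral_smul,
      ← integral_add
        (show Integrable (fun a : ℝ => (2⁻¹:ℝ≥0∞).toReal • (1 / ((Real.sqrt a : ℂ) - z))) ω from
          (aux_int ω z hz _ hm1).smul ((2⁻¹:ℝ≥0∞).toReal))
        (show Integrable (fun a : ℝ => (2⁻¹:ℝ≥0∞).toReal • (1 / (((-Real.sqrt a : ℝ) : ℂ) - z))) ω from
          (aux_int ω z hz _ hm2).smul ((2⁻¹:ℝ≥0∞).toReal))]
    apply integral_congr_ae
    filter_upwards [hae] with l hl
    have hs : ((Real.sqrt l : ℂ))^2 = (l : ℂ) := by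
      rw [← Complex.ofReal_pow, Real.sq_sqrt hl]
    have h1 : ((Real.sqrt l : ℂ) - z) ≠ 0 := aux_ne z hz _
    have h2 : (-(Real.sqrt l : ℂ) - z) ≠ 0 := by
      have := aux_ne z hz (-Real.sqrt l); push_cast at this; exact this
    have h3 : ((l : ℂ) - z ^ 2) ≠ 0 := by
      rw [← hs]
      intro h
      have hmul : ((Real.sqrt l : ℂ) - z) * ((Real.sqrt l : ℂ) + z) = 0 := by
        linear_combination h
      rcases mul_eq_zero.1 hmul with h' | h'
      · exact h1 h'
      · exact h2 (by linear_combination -h')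
    rw [← hs] at *
    push_cast
    simp only [ENNReal.toReal_inv, ENNReal.toReal_ofNat, Complex.real_smul]
    push_cast
    field_simp
    ring
end

section
/- Let P, K ≥ 1, let A be a P×P and B a P×K complex matrix. Assume (i) every eigenvalue of A has modulus strictly less than 1, and (ii) the P×(K·P) block matrix (B, AB, A²B, …, A^{P−1}B) has rank P. Then the series ∑_{k=0}^{∞} A^k·B·Bᴴ·(Aᴴ)^k converges and its sum is a Hermitian positive definite P×P matrix. -/
open Matrix
open scoped ComplexOrder

section Stmt6Aux

open Filter
open scoped NNReal ENNReal

attribute [local instance] Matrix.linftyOpNormedRing Matrix.linftyOpNormedAlgebra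
  Matrix.linftyOpNormedAddCommGroup

private lemma stmt6_rad {P : ℕ} (hP : 1 ≤ P) (M : Matrix (Fin P) (Fin P) ℂ)
    (h : ∀ μ : ℂ, ¬ IsUnit (M - μ • (1 : Matrix (Fin P) (Fin P) ℂ)) → ‖μ‖ < 1) :
    spectralRadius ℂ M < 1 := by
  have : Nonempty (Fin P) := ⟨⟨0, hP⟩⟩
  have : Nontrivial (Matrix (Fin P) (Fin P) ℂ) := inferInstance
  obtain ⟨z, hz, hzr⟩ := spectrum.exists_nnnorm_eq_spectralRadius M
  rw [← hzr]
  have hz' : ¬ IsUnit (M - z • (1 : Matrix (Fin P) (Fin P) ℂ)) := by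
    rw [spectrum.mem_iff] at hz
    intro hu
    apply hz
    rw [Algebra.algebraMap_eq_smul_one]
    have := hu.neg
    rwa [neg_sub] at this
  have := h z hz'
  exact_mod_cast ENNReal.coe_lt_one_iff.mpr (by exact_mod_cast this)

private lemma stmt6_geom {P : ℕ} (M : Matrix (Fin P) (Fin P) ℂ) (h : spectralRadius ℂ M < 1) :
    ∃ r : ℝ≥0, r < 1 ∧ ∀ᶠ k : ℕ in atTop, ‖M ^ k‖₊ ≤ r ^ k := by
  obtain ⟨R, hR1, hR2⟩ := exists_between h
  lift R to ℝ≥0 using (hR2.trans ENNReal.one_lt_top).ne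
  refine ⟨R, by exact_mod_cast hR2, ?_⟩
  have hG := spectrum.pow_nnnorm_pow_one_div_tendsto_nhds_spectralRadius M
  have hev : ∀ᶠ k : ℕ in atTop, (‖M ^ k‖₊ : ℝ≥0∞) ^ (1 / (k : ℝ)) < R :=
    hG.eventually_lt_const hR1
  filter_upwards [hev, eventually_ge_atTop 1] with k hk hk1
  have hkne : (k : ℝ) ≠ 0 := Nat.cast_ne_zero.mpr (by omega)
  have h2 := ENNReal.rpow_le_rpow hk.le (by positivity : (0 : ℝ) ≤ (k : ℝ))
  rw [← ENNReal.rpow_mul, one_div, inv_mul_cancel₀ hkne, ENNReal.rpow_one,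
    ENNReal.rpow_natCast] at h2
  exact_mod_cast h2

private lemma stmt6_summable {P K : ℕ} (hP : 1 ≤ P)
    (A : Matrix (Fin P) (Fin P) ℂ) (B : Matrix (Fin P) (Fin K) ℂ)
    (hspec : ∀ μ : ℂ, ¬ IsUnit (A - μ • (1 : Matrix (Fin P) (Fin P) ℂ)) → ‖μ‖ < 1) :
    Summable (fun k : ℕ => A ^ k * B * Bᴴ * Aᴴ ^ k) := by
  have hspecH : ∀ μ : ℂ, ¬ IsUnit (Aᴴ - μ • (1 : Matrix (Fin P) (Fin P) ℂ)) → ‖μ‖ < 1 := by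
    intro μ hμ
    have h1 : (A - (starRingEnd ℂ μ) • (1 : Matrix (Fin P) (Fin P) ℂ))ᴴ = Aᴴ - μ • 1 := by
      simp
    have h2 : ¬ IsUnit (A - (starRingEnd ℂ μ) • (1 : Matrix (Fin P) (Fin P) ℂ)) := by
      intro h
      exact hμ (h1 ▸ ((Matrix.isUnit_conjTranspose _).mpr h))
    simpa using hspec _ h2
  obtain ⟨r, hr, hAev⟩ := stmt6_geom A (stmt6_rad hP A hspec)
  obtain ⟨s, hs, hBev⟩ := stmt6_geom Aᴴ (stmt6_rad hP Aᴴ hspecH)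
  apply Summable.of_norm_bounded_eventually_nat
    (g := fun k => (‖B‖ * ‖Bᴴ‖) * ((r : ℝ) * (s : ℝ)) ^ k)
  · apply Summable.mul_left
    apply summable_geometric_of_lt_one (by positivity)
    have hr' : (r : ℝ) < 1 := by exact_mod_cast hr
    have hs' : (s : ℝ) < 1 := by exact_mod_cast hs
    nlinarith [r.coe_nonneg, s.coe_nonneg]
  · filter_upwards [hAev, hBev] with k h1 h2
    have h1' : ‖A ^ k‖ ≤ (r : ℝ) ^ k := by exact_mod_cast h1
    have h2' : ‖Aᴴ ^ k‖ ≤ (s : ℝ) ^ k := by exact_mod_cast h2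
    calc ‖A ^ k * B * Bᴴ * Aᴴ ^ k‖
        ≤ ‖A ^ k * B * Bᴴ‖ * ‖Aᴴ ^ k‖ := Matrix.linfty_opNorm_mul _ _
      _ ≤ ‖A ^ k * B‖ * ‖Bᴴ‖ * ‖Aᴴ ^ k‖ := by
          gcongr
          exact Matrix.linfty_opNorm_mul _ _
      _ ≤ ‖A ^ k‖ * ‖B‖ * ‖Bᴴ‖ * ‖Aᴴ ^ k‖ := by
          gcongr
          exact Matrix.linfty_opNorm_mul _ _
      _ ≤ (r : ℝ) ^ k * ‖B‖ * ‖Bᴴ‖ * (s : ℝ) ^ k := by gcongr <;> positivity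
      _ = (‖B‖ * ‖Bᴴ‖) * ((r : ℝ) * (s : ℝ)) ^ k := by ring

end Stmt6Aux

private lemma stmt6_vecMul_inj {P : ℕ} {n : Type*} [Fintype n] (C : Matrix (Fin P) n ℂ)
    (h : C.rank = P) :
    Function.Injective C.vecMul := by
  rw [Matrix.vecMul_injective_iff, linearIndependent_iff_card_eq_finrank_span]
  simpa [Set.finrank, ← C.rank_eq_finrank_span_row] using h.symm

set_option maxHeartbeats 1000000 in
/-- Let `A` be a `P×P` and `B` a `P×K` complex matrix. If every eigenvalue of
`A` has modulus `< 1` and the commandability matrix `(B, AB, …, A^{P−1}B)` has rank `P`, then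
the series `∑_{k} A^k B Bᴴ (Aᴴ)^k` converges and its sum is Hermitian positive definite. -/
theorem stmt6 (P K : ℕ) (hP : 1 ≤ P) (hK : 1 ≤ K)
    (A : Matrix (Fin P) (Fin P) ℂ) (B : Matrix (Fin P) (Fin K) ℂ)
    (hspec : ∀ μ : ℂ, ¬ IsUnit (A - μ • (1 : Matrix (Fin P) (Fin P) ℂ)) → ‖μ‖ < 1)
    (hrank : (Matrix.of fun (p : Fin P) (jk : Fin P × Fin K) =>
        (A ^ (jk.1 : ℕ) * B) p jk.2).rank = P) :
    Summable (fun k : ℕ => A ^ k * B * Bᴴ * Aᴴ ^ k) ∧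
    Matrix.PosDef (∑' k : ℕ, A ^ k * B * Bᴴ * Aᴴ ^ k) := by
  have hsum : Summable (fun k : ℕ => A ^ k * B * Bᴴ * Aᴴ ^ k) := stmt6_summable hP A B hspec
  have hfact : ∀ k : ℕ, A ^ k * B * Bᴴ * Aᴴ ^ k = (A ^ k * B) * (A ^ k * B)ᴴ := by
    intro k
    rw [Matrix.conjTranspose_mul, Matrix.conjTranspose_pow, Matrix.mul_assoc]
  refine ⟨hsum, Matrix.PosDef.of_dotProduct_mulVec_pos ?_ ?_⟩
  · -- Hermitian
    rw [Matrix.IsHermitian, Matrix.conjTranspose_tsum]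
    apply tsum_congr
    intro k
    rw [hfact k]
    exact Matrix.isHermitian_mul_conjTranspose_self _
  · -- positivity
    intro x hx
    -- the quadratic form as a continuous linear map
    let L : Matrix (Fin P) (Fin P) ℂ →ₗ[ℂ] ℂ :=
      { toFun := fun M => dotProduct (star x) (M *ᵥ x)
        map_add' := fun M N => by simp [Matrix.add_mulVec]
        map_smul' := fun c M => by simp [Matrix.smul_mulVec] }
    let L' := LinearMap.toContinuousLinearMap L
    have hL' : ∀ M, L' M = dotProduct (star x) (M *ᵥ x) := fun _ => rfl
    set w : ℕ → Fin K → ℂ := fun k => (A ^ k * B)ᴴ *ᵥ x with hw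
    set g : ℕ → ℝ := fun k => ∑ a, Complex.normSq (w k a) with hg
    have hsw : ∀ k, star (w k) = star x ᵥ* (A ^ k * B) := by
      intro k
      rw [hw]
      exact (Matrix.star_mulVec _ _).trans (by rw [Matrix.conjTranspose_conjTranspose])
    have hq : ∀ k : ℕ, L' (A ^ k * B * Bᴴ * Aᴴ ^ k) = (g k : ℂ) := by
      intro k
      rw [hL', hfact k, ← Matrix.mulVec_mulVec, Matrix.dotProduct_mulVec, ← hsw k]
      simp only [dotProduct, Pi.star_apply, hg, hw]
      push_cast
      refine Finset.sum_congr rfl fun a _ => ?_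
      simp [Complex.star_def, Complex.normSq_eq_conj_mul_self]
    have hsumL : Summable (fun k => L' (A ^ k * B * Bᴴ * Aᴴ ^ k)) := hsum.mapL L'
    have hsumg : Summable g := by
      have : Summable (fun k => Complex.reCLM (L' (A ^ k * B * Bᴴ * Aᴴ ^ k))) := hsumL.mapL _
      refine this.congr fun k => ?_
      rw [hq k]
      simp
    have hgnonneg : ∀ k, 0 ≤ g k := fun k =>
      Finset.sum_nonneg fun a _ => Complex.normSq_nonneg _
    -- find a positive term
    have hex : ∃ k, 0 < g k := by
      by_contra h0
      push_neg at h0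
      have hg0 : ∀ k, g k = 0 := fun k => le_antisymm (h0 k) (hgnonneg k)
      have hw0 : ∀ k a, w k a = 0 := by
        intro k a
        have := (Finset.sum_eq_zero_iff_of_nonneg
          (fun a _ => Complex.normSq_nonneg (w k a))).mp (hg0 k) a (Finset.mem_univ a)
        exact Complex.normSq_eq_zero.mp this
      set C : Matrix (Fin P) (Fin P × Fin K) ℂ :=
        Matrix.of fun (p : Fin P) (jk : Fin P × Fin K) => (A ^ (jk.1 : ℕ) * B) p jk.2 with hC
      have hCx : star x ᵥ* C = 0 := by
        funext jk
        have h1 := congrArg star (hw0 (jk.1 : ℕ) jk.2)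
        simp only [Matrix.mulVec, Matrix.vecMul, dotProduct, Matrix.conjTranspose_apply,
          star_sum, star_mul', star_star, star_zero, hw, hC, Matrix.of_apply,
          Pi.star_apply, Pi.zero_apply] at h1 ⊢
        exact (Finset.sum_congr rfl fun p _ => mul_comm _ _).trans h1
      have hinj := stmt6_vecMul_inj C hrank
      have hx0 : star x = 0 := hinj
        (show Matrix.vecMul (star x) C = Matrix.vecMul 0 C by rw [hCx, Matrix.zero_vecMul])
      exact hx (star_eq_zero.mp hx0)
    obtain ⟨k0, hk0⟩ := hex
    have hLS : L' (∑' k, A ^ k * B * Bᴴ * Aᴴ ^ k) = ((∑' k, g k : ℝ) : ℂ) := by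
      rw [L'.map_tsum hsum]
      rw [Complex.ofReal_tsum]
      exact tsum_congr hq
    have : dotProduct (star x) ((∑' k, A ^ k * B * Bᴴ * Aᴴ ^ k) *ᵥ x) = ((∑' k, g k : ℝ) : ℂ) := by
      rw [← hL', hLS]
    rw [this]
    exact Complex.zero_lt_real.mpr (Summable.tsum_pos hsumg hgnonneg k0 hk0)
end

section
/- Let r ≥ 1, let Δ be an r×r Hermitian positive definite complex matrix, let Γ be an r×r complex matrix such that the spectral norm of Δ⁻¹·Γ·Δ⁻¹ is at most 1, and let t ∈ ℂ with Im t > 0. Then the Hermitian 2r×2r block matrix [[Im(t)·(1+|t|²)·Δ², Im(t²)·Γᴴ], [Im(t²)·Γ, Im(t)·(1+|t|²)·Δ²]] is positive definite. -/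
open Matrix
open scoped ComplexOrder

local notation "⟪" x ", " y "⟫" => @inner ℂ _ _ x y

private lemma quad_sq' {r : ℕ} {Δ : Matrix (Fin r) (Fin r) ℂ} (hΔ : Δ.IsHermitian)
    (v : Fin r → ℂ) :
    dotProduct (star v) ((Δ ^ 2) *ᵥ v) =
      ((‖(WithLp.equiv 2 (Fin r → ℂ)).symm (Δ *ᵥ v)‖ : ℝ) : ℂ) ^ 2 := by
  have h1 : (Δ ^ 2) *ᵥ v = Δ *ᵥ (Δ *ᵥ v) := by rw [pow_two, ← mulVec_mulVec]
  have h2 : star v ᵥ* Δ = star (Δ *ᵥ v) := by rw [star_mulVec, hΔ.eq]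
  rw [h1, dotProduct_mulVec, h2, WithLp.equiv_symm_apply, dotProduct_comm,
    ← EuclideanSpace.inner_toLp_toLp,
    inner_self_eq_norm_sq_to_K]
  norm_cast

private lemma final_ineq {a b n₁ n₂ zre : ℝ} (hba : |b| < a) (hn : 0 < n₁ ^ 2 + n₂ ^ 2)
    (key : -(2 * |b| * (n₂ * n₁)) ≤ 2 * b * zre) :
    0 < a * n₁ ^ 2 + a * n₂ ^ 2 + 2 * b * zre := by
  nlinarith [mul_pos (sub_pos.mpr hba) hn,
    mul_nonneg (abs_nonneg b) (sq_nonneg (n₁ - n₂))]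

/-- Let `Δ` be an `r×r` Hermitian positive definite complex matrix, `Γ` an
`r×r` complex matrix with spectral norm `‖Δ⁻¹ Γ Δ⁻¹‖ ≤ 1`, and `t ∈ ℂ` with `Im t > 0`. Then
the Hermitian block matrix
`[[Im(t)(1+|t|²) Δ², Im(t²) Γᴴ], [Im(t²) Γ, Im(t)(1+|t|²) Δ²]]` is positive definite. -/
theorem stmt9 (r : ℕ) (hr : 1 ≤ r)
    (Δ : Matrix (Fin r) (Fin r) ℂ) (hΔ : Δ.PosDef)
    (Γ : Matrix (Fin r) (Fin r) ℂ)
    (hΓ : ‖Matrix.toEuclideanCLM (𝕜 := ℂ) (Δ⁻¹ * Γ * Δ⁻¹)‖ ≤ 1)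
    (t : ℂ) (ht : 0 < t.im) :
    Matrix.PosDef (Matrix.fromBlocks
      (((t.im * (1 + ‖t‖ ^ 2) : ℝ) : ℂ) • (Δ ^ 2))
      ((((t ^ 2).im : ℝ) : ℂ) • Γᴴ)
      ((((t ^ 2).im : ℝ) : ℂ) • Γ)
      (((t.im * (1 + ‖t‖ ^ 2) : ℝ) : ℂ) • (Δ ^ 2))) := by
  set a : ℝ := t.im * (1 + ‖t‖ ^ 2) with ha
  set b : ℝ := (t ^ 2).im with hb
  have habs : ‖t‖ ^ 2 = t.re ^ 2 + t.im ^ 2 := by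
    rw [Complex.sq_norm, Complex.normSq_apply]; ring
  have hb' : b = 2 * t.re * t.im := by
    rw [hb, pow_two, Complex.mul_im]; ring
  have hba : |b| < a := by
    rw [hb', ha, habs]
    rcases abs_cases (2 * t.re * t.im) with ⟨h, _⟩ | ⟨h, _⟩ <;> rw [h] <;>
      nlinarith [mul_nonneg ht.le (sq_nonneg (t.re - 1)),
        mul_nonneg ht.le (sq_nonneg (t.re + 1)), mul_pos ht (mul_pos ht ht)]
  have hΔH : Δ.IsHermitian := hΔ.1
  have hunit : IsUnit Δ.det := (Matrix.isUnit_iff_isUnit_det Δ).mp hΔ.isUnit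
  have hfact : Δ * (Δ⁻¹ * Γ * Δ⁻¹) * Δ = Γ := by
    rw [← Matrix.mul_assoc, ← Matrix.mul_assoc, Matrix.mul_nonsing_inv _ hunit,
      Matrix.one_mul, Matrix.mul_assoc, Matrix.nonsing_inv_mul _ hunit, Matrix.mul_one]
  set T := Δ⁻¹ * Γ * Δ⁻¹ with hT
  rw [Matrix.posDef_iff_dotProduct_mulVec]
  constructor
  · simp [Matrix.IsHermitian, fromBlocks_conjTranspose, conjTranspose_smul, Complex.star_def,
      Complex.conj_ofReal, conjTranspose_pow, hΔH.eq]
  · intro x hx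
    set x₁ : Fin r → ℂ := x ∘ Sum.inl with hx₁
    set x₂ : Fin r → ℂ := x ∘ Sum.inr with hx₂
    have hxe : x = Sum.elim x₁ x₂ := (Sum.elim_comp_inl_inr x).symm
    set u₁ : EuclideanSpace ℂ (Fin r) := (WithLp.equiv 2 (Fin r → ℂ)).symm (Δ *ᵥ x₁) with hu₁
    set u₂ : EuclideanSpace ℂ (Fin r) := (WithLp.equiv 2 (Fin r → ℂ)).symm (Δ *ᵥ x₂) with hu₂
    set n₁ : ℝ := ‖u₁‖ with hn₁
    set n₂ : ℝ := ‖u₂‖ with hn₂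
    set z : ℂ := dotProduct (star x₂) (Γ *ᵥ x₁) with hz
    have key : ⟪u₂, Matrix.toEuclideanCLM (𝕜 := ℂ) T u₁⟫
        = dotProduct (star (Δ *ᵥ x₂)) (T *ᵥ (Δ *ᵥ x₁)) := by
      rw [hu₁, hu₂, WithLp.equiv_symm_apply, Matrix.toEuclideanCLM_toLp, EuclideanSpace.inner_toLp_toLp]
      rw [dotProduct_comm]
    have hzinner : z = ⟪u₂, Matrix.toEuclideanCLM (𝕜 := ℂ) T u₁⟫ := by
      have h2 : star x₂ ᵥ* Δ = star (Δ *ᵥ x₂) := by rw [star_mulVec, hΔH.eq]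
      rw [hz, ← hfact, key,
        (by simp [Matrix.mul_assoc] : (Δ * T * Δ) *ᵥ x₁ = Δ *ᵥ (T *ᵥ (Δ *ᵥ x₁))),
        dotProduct_mulVec, h2]
    have hzbound : ‖z‖ ≤ n₂ * n₁ := by
      have h5 : ‖Matrix.toEuclideanCLM (𝕜 := ℂ) T u₁‖ ≤ n₁ := by
        calc ‖Matrix.toEuclideanCLM (𝕜 := ℂ) T u₁‖
            ≤ ‖Matrix.toEuclideanCLM (𝕜 := ℂ) T‖ * ‖u₁‖ :=
              (Matrix.toEuclideanCLM (𝕜 := ℂ) T).le_opNorm u₁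
          _ ≤ 1 * ‖u₁‖ := mul_le_mul_of_nonneg_right hΓ (norm_nonneg _)
          _ = n₁ := one_mul _
      calc ‖z‖ = ‖⟪u₂, Matrix.toEuclideanCLM (𝕜 := ℂ) T u₁⟫‖ := by
            rw [hzinner]
        _ ≤ ‖u₂‖ * ‖Matrix.toEuclideanCLM (𝕜 := ℂ) T u₁‖ := norm_inner_le_norm _ _
        _ ≤ n₂ * n₁ := mul_le_mul_of_nonneg_left h5 (norm_nonneg _)
    have hc₁ : dotProduct (star x₁) (Γᴴ *ᵥ x₂) = star z := by
      rw [hz, star_dotProduct, star_mulVec, conjTranspose_conjTranspose, ← dotProduct_mulVec]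
    have hzz : (b : ℂ) * star z + (b : ℂ) * z = ((2 * b * z.re : ℝ) : ℂ) := by
      rw [Complex.star_def,
        (by ring : (b:ℂ) * (starRingEnd ℂ) z + (b:ℂ) * z = (b:ℂ) * (z + (starRingEnd ℂ) z)),
        Complex.add_conj]
      push_cast; ring
    have hQ : dotProduct (star x) ((Matrix.fromBlocks
        ((a : ℂ) • (Δ ^ 2)) ((b : ℂ) • Γᴴ) ((b : ℂ) • Γ) ((a : ℂ) • (Δ ^ 2))) *ᵥ x)
        = ((a * n₁ ^ 2 + a * n₂ ^ 2 + 2 * b * z.re : ℝ) : ℂ) := by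
      rw [hxe, Function.star_sumElim, fromBlocks_mulVec, sumElim_dotProduct_sumElim]
      simp only [Sum.elim_comp_inl, Sum.elim_comp_inr]
      rw [dotProduct_add, dotProduct_add, smul_mulVec, smul_mulVec,
        smul_mulVec, smul_mulVec, dotProduct_smul, dotProduct_smul,
        dotProduct_smul, dotProduct_smul, quad_sq' hΔH, quad_sq' hΔH, hc₁, ← hz,
        ← hu₁, ← hu₂, ← hn₁, ← hn₂]
      simp only [smul_eq_mul]
      push_cast at hzz ⊢
      linear_combination hzz
    rw [hQ, Complex.zero_lt_real]
    have hinj : Function.Injective (Δ.mulVec) := Matrix.mulVec_injective_iff_isUnit.mpr hΔ.isUnit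
    have hx12 : x₁ ≠ 0 ∨ x₂ ≠ 0 := by
      by_contra h
      push_neg at h
      apply hx
      rw [hxe, h.1, h.2]
      ext (i | i) <;> simp
    have hn : 0 < n₁ ^ 2 + n₂ ^ 2 := by
      rcases hx12 with h | h
      · have h1 : Δ *ᵥ x₁ ≠ 0 := fun h0 => h (hinj (by simpa using h0))
        have h2 : u₁ ≠ 0 := fun h0 => h1 (by
          simpa [hu₁] using congrArg (WithLp.equiv 2 (Fin r → ℂ)) h0)
        have : 0 < n₁ := norm_pos_iff.mpr h2
        positivity
      · have h1 : Δ *ᵥ x₂ ≠ 0 := fun h0 => h (hinj (by simpa using h0))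
        have h2 : u₂ ≠ 0 := fun h0 => h1 (by
          simpa [hu₂] using congrArg (WithLp.equiv 2 (Fin r → ℂ)) h0)
        have : 0 < n₂ := norm_pos_iff.mpr h2
        positivity
    have hzre : |z.re| ≤ n₂ * n₁ := le_trans (Complex.abs_re_le_norm z) hzbound
    have keyineq : -(2 * |b| * (n₂ * n₁)) ≤ 2 * b * z.re := by
      have h6 : |2 * b * z.re| ≤ 2 * |b| * (n₂ * n₁) := by
        rw [abs_mul, abs_mul, abs_two]
        exact mul_le_mul_of_nonneg_left hzre (by positivity)
      linarith [neg_abs_le (2 * b * z.re)]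
    exact final_ineq hba hn keyineq
end

section
/- Let r ≥ 1, let G be an r×r Hermitian negative definite complex matrix, let u, v ∈ ℂ^r be unit vectors, and let χ > 0. Consider the Hermitian 2r×2r block matrix M = [[G, χ·v·uᴴ], [χ·u·vᴴ, G]]. If χ²·(uᴴG⁻¹u)·(vᴴG⁻¹v) ≥ 1, then M has exactly 2r−1 strictly negative eigenvalues (counted with multiplicity); if χ²·(uᴴG⁻¹u)·(vᴴG⁻¹v) < 1, then M has exactly 2r strictly negative eigenvalues. -/
open Matrix
open scoped ComplexOrder

set_option linter.unusedSectionVars false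
set_option maxHeartbeats 1000000

namespace Stmt10Aux

variable {ι : Type*} [Fintype ι] [DecidableEq ι]

noncomputable def coordSub (s : Finset ι) : Submodule ℂ (ι → ℂ) where
  carrier := {y | ∀ i ∉ s, y i = 0}
  add_mem' := fun {a b} ha hb i hi => by simp [ha i hi, hb i hi]
  zero_mem' := fun i _ => rfl
  smul_mem' := fun c a ha i hi => by simp [ha i hi]

lemma mem_coordSub {s : Finset ι} {y : ι → ℂ} : y ∈ coordSub s ↔ ∀ i ∉ s, y i = 0 := Iff.rfl

noncomputable def coordSubEquiv (s : Finset ι) : coordSub s ≃ₗ[ℂ] (s → ℂ) where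
  toFun y i := y.1 i
  map_add' a b := rfl
  map_smul' c a := rfl
  invFun f := ⟨fun i => if h : i ∈ s then f ⟨i, h⟩ else 0, fun i hi => by simp [hi]⟩
  left_inv y := by
    ext i
    by_cases h : i ∈ s
    · simp [h]
    · simp [h, y.2 i h]
  right_inv f := by ext i; simp

lemma finrank_coordSub (s : Finset ι) : Module.finrank ℂ (coordSub s) = s.card := by
  rw [(coordSubEquiv s).finrank_eq, Module.finrank_fintype_fun_eq_card, Fintype.card_coe]

lemma exists_ne_zero_mem_inf {U W : Submodule ℂ (ι → ℂ)}
    (h : Fintype.card ι < Module.finrank ℂ U + Module.finrank ℂ W) :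
    ∃ x : ι → ℂ, x ≠ 0 ∧ x ∈ U ∧ x ∈ W := by
  have h1 := Submodule.finrank_sup_add_finrank_inf_eq U W
  have h2 : Module.finrank ℂ ↥(U ⊔ W) ≤ Fintype.card ι := by
    have := Submodule.finrank_le (U ⊔ W)
    rwa [Module.finrank_fintype_fun_eq_card] at this
  have h3 : 0 < Module.finrank ℂ ↥(U ⊓ W) := by omega
  have h4 : Nontrivial ↥(U ⊓ W) := Module.finrank_pos_iff.mp h3
  obtain ⟨y, hy⟩ := exists_ne (0 : ↥(U ⊓ W))
  exact ⟨(y : ι → ℂ), by simpa using hy, y.2.1, y.2.2⟩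

noncomputable def unitaryEquiv (U : Matrix ι ι ℂ) (hU : U ∈ Matrix.unitaryGroup ι ℂ) :
    (ι → ℂ) ≃ₗ[ℂ] (ι → ℂ) :=
  LinearEquiv.ofLinear (Matrix.mulVecLin (star U)) (Matrix.mulVecLin U)
    (by rw [← Matrix.mulVecLin_mul, (Unitary.mem_iff.mp hU).1, Matrix.mulVecLin_one])
    (by rw [← Matrix.mulVecLin_mul, (Unitary.mem_iff.mp hU).2, Matrix.mulVecLin_one])

lemma unitaryEquiv_apply (U : Matrix ι ι ℂ) (hU : U ∈ Matrix.unitaryGroup ι ℂ) (x : ι → ℂ) :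
    unitaryEquiv U hU x = (star U) *ᵥ x := rfl

lemma quad_form_eq_sum (A : Matrix ι ι ℂ) (hA : A.IsHermitian) (x : ι → ℂ) :
    (star x ⬝ᵥ A *ᵥ x).re
      = ∑ i, hA.eigenvalues i * Complex.normSq (((star (hA.eigenvectorUnitary : Matrix ι ι ℂ)) *ᵥ x) i) := by
  set U : Matrix ι ι ℂ := (hA.eigenvectorUnitary : Matrix ι ι ℂ) with hU
  set y : ι → ℂ := (star U) *ᵥ x with hy
  have hxU : star x ᵥ* U = star y := by
    rw [hy, Matrix.star_mulVec, Matrix.star_eq_conjTranspose, Matrix.conjTranspose_conjTranspose]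
  conv_lhs => rw [hA.spectral_theorem, Unitary.conjStarAlgAut_apply, ← Matrix.mulVec_mulVec, ← Matrix.mulVec_mulVec,
    Matrix.dotProduct_mulVec, hxU]
  rw [show star (hA.eigenvectorUnitary : Matrix ι ι ℂ) *ᵥ x = y from rfl]
  have h2 : star y ⬝ᵥ (Matrix.diagonal (RCLike.ofReal ∘ hA.eigenvalues) *ᵥ y)
      = ∑ i, (starRingEnd ℂ) (y i) * (((hA.eigenvalues i : ℝ) : ℂ) * y i) := by
    simp [dotProduct, Matrix.mulVec_diagonal]
  rw [h2, Complex.re_sum]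
  refine Finset.sum_congr rfl fun i _ => ?_
  have : (starRingEnd ℂ) (y i) * (((hA.eigenvalues i : ℝ) : ℂ) * y i)
      = ((hA.eigenvalues i * Complex.normSq (y i) : ℝ) : ℂ) := by
    rw [mul_left_comm, mul_comm ((starRingEnd ℂ) (y i)), Complex.mul_conj, ← Complex.ofReal_mul]
  rw [this, Complex.ofReal_re]

lemma count_eigen (A : Matrix ι ι ℂ) (hA : A.IsHermitian) (k : ℕ)
    (W V : Submodule ℂ (ι → ℂ))
    (hWr : Module.finrank ℂ W = k)
    (hVr : Module.finrank ℂ V = Fintype.card ι - k)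
    (hk : k ≤ Fintype.card ι)
    (hW : ∀ x ∈ W, x ≠ 0 → (star x ⬝ᵥ A *ᵥ x).re < 0)
    (hV : ∀ x ∈ V, 0 ≤ (star x ⬝ᵥ A *ᵥ x).re) :
    (Finset.univ.filter fun i => hA.eigenvalues i < 0).card = k := by
  classical
  set U : Matrix ι ι ℂ := (hA.eigenvectorUnitary : Matrix ι ι ℂ) with hUdef
  have hUmem : U ∈ Matrix.unitaryGroup ι ℂ := hA.eigenvectorUnitary.2
  set L := unitaryEquiv U hUmem with hLdef
  have hQ : ∀ x : ι → ℂ, (star x ⬝ᵥ A *ᵥ x).re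
      = ∑ i, hA.eigenvalues i * Complex.normSq ((L x) i) := fun x => quad_form_eq_sum A hA x
  set Neg : Finset ι := Finset.univ.filter (fun i => hA.eigenvalues i < 0) with hNeg
  set Pos : Finset ι := Finset.univ.filter (fun i => ¬ hA.eigenvalues i < 0) with hPos
  have hcards : Neg.card + Pos.card = Fintype.card ι := by
    rw [hNeg, hPos, Finset.card_filter_add_card_filter_not, Finset.card_univ]
  -- membership and sign facts
  have hQpos : ∀ y : ι → ℂ, y ∈ coordSub Pos →
      0 ≤ ∑ i, hA.eigenvalues i * Complex.normSq (y i) := by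
    intro y hy
    refine Finset.sum_nonneg fun i _ => ?_
    by_cases h : i ∈ Pos
    · have : 0 ≤ hA.eigenvalues i := not_lt.mp (Finset.mem_filter.mp h).2
      exact mul_nonneg this (Complex.normSq_nonneg _)
    · rw [hy i h]
      simp
  have hQneg : ∀ y : ι → ℂ, y ∈ coordSub Neg → y ≠ 0 →
      ∑ i, hA.eigenvalues i * Complex.normSq (y i) < 0 := by
    intro y hy hy0
    obtain ⟨j, hj⟩ := Function.ne_iff.mp hy0
    have hjNeg : j ∈ Neg := by
      by_contra h
      exact hj (hy j h)
    have hterm : hA.eigenvalues j * Complex.normSq (y j) < 0 :=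
      mul_neg_of_neg_of_pos (Finset.mem_filter.mp hjNeg).2 (Complex.normSq_pos.mpr hj)
    have h1 : ∀ i ∈ Finset.univ, hA.eigenvalues i * Complex.normSq (y i) ≤ (fun _ => (0:ℝ)) i := by
      intro i _
      by_cases h : i ∈ Neg
      · exact mul_nonpos_of_nonpos_of_nonneg (le_of_lt (Finset.mem_filter.mp h).2)
          (Complex.normSq_nonneg _)
      · rw [hy i h]; simp
    have := Finset.sum_lt_sum h1 ⟨j, Finset.mem_univ j, by simpa using hterm⟩
    simpa using this
  -- lower bound : k ≤ Neg.card
  have hlow : k ≤ Neg.card := by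
    by_contra hcon
    push_neg at hcon
    have hbig : Fintype.card ι <
        Module.finrank ℂ (W.map (L : (ι → ℂ) →ₗ[ℂ] (ι → ℂ))) + Module.finrank ℂ (coordSub Pos) := by
      rw [LinearEquiv.finrank_map_eq, hWr, finrank_coordSub]
      omega
    obtain ⟨y, hy0, hyW, hyP⟩ := exists_ne_zero_mem_inf hbig
    obtain ⟨x, hxW, hxy⟩ := Submodule.mem_map.mp hyW
    have hx0 : x ≠ 0 := by
      rintro rfl
      exact hy0 (by simpa using hxy.symm)
    have := hW x hxW hx0
    rw [hQ x] at this
    have h2 := hQpos y hyP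
    rw [show (L x : ι → ℂ) = y from hxy] at this
    linarith
  -- upper bound : Neg.card ≤ k
  have hhigh : Neg.card ≤ k := by
    by_contra hcon
    push_neg at hcon
    have hbig : Fintype.card ι <
        Module.finrank ℂ (V.map (L : (ι → ℂ) →ₗ[ℂ] (ι → ℂ))) + Module.finrank ℂ (coordSub Neg) := by
      rw [LinearEquiv.finrank_map_eq, hVr, finrank_coordSub]
      omega
    obtain ⟨y, hy0, hyV, hyN⟩ := exists_ne_zero_mem_inf hbig
    obtain ⟨x, hxV, hxy⟩ := Submodule.mem_map.mp hyV
    have h1 := hV x hxV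
    rw [hQ x, show (L x : ι → ℂ) = y from hxy] at h1
    have h2 := hQneg y hyN hy0
    linarith
  omega

noncomputable def posDefCore {H : Matrix ι ι ℂ} (hH : H.PosDef) :
    InnerProductSpace.Core ℂ (ι → ℂ) where
  inner x y := dotProduct (star x) (H *ᵥ y)
  conj_inner_symm x y := by
    rw [star_dotProduct, starRingEnd_apply, star_star, star_mulVec, dotProduct_mulVec,
      hH.isHermitian.eq]
  re_inner_nonneg x := by
    by_cases h : x = 0
    · simp [h]
    · exact le_of_lt (hH.re_dotProduct_pos h)
  definite x (hx : dotProduct _ _ = 0) := by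
    by_contra! h
    simpa [hx, lt_irrefl] using hH.re_dotProduct_pos h
  add_left := by simp only [star_add, add_dotProduct, eq_self_iff_true, forall_const]
  smul_left x y r := by
    rw [← smul_eq_mul, ← smul_dotProduct, starRingEnd_apply, ← star_smul]

lemma cauchySchwarz {H : Matrix ι ι ℂ} (hH : H.PosDef) (w x : ι → ℂ) :
    Complex.normSq (star w ⬝ᵥ x)
      ≤ (star w ⬝ᵥ H⁻¹ *ᵥ w).re * (star x ⬝ᵥ H *ᵥ x).re := by
  have hdet : IsUnit H.det := (Matrix.isUnit_iff_isUnit_det _).mp hH.isUnit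
  set g : ι → ℂ := H⁻¹ *ᵥ w with hg
  have hHg : H *ᵥ g = w := by
    rw [hg, Matrix.mulVec_mulVec, Matrix.mul_nonsing_inv _ hdet, Matrix.one_mulVec]
  have hstar : star g ᵥ* H = star w := by
    have h := Matrix.star_mulVec Hᴴ g
    rw [Matrix.conjTranspose_conjTranspose] at h
    rw [← h, hH.isHermitian.eq, hHg]
  have hgx : (posDefCore hH).inner g x = star w ⬝ᵥ x := by
    show star g ⬝ᵥ H *ᵥ x = _
    rw [Matrix.dotProduct_mulVec, hstar]
  have hgg : (posDefCore hH).inner g g = star w ⬝ᵥ H⁻¹ *ᵥ w := by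
    show star g ⬝ᵥ H *ᵥ g = _
    rw [Matrix.dotProduct_mulVec, hstar]
  have hxg : (posDefCore hH).inner x g = (starRingEnd ℂ) (star w ⬝ᵥ x) := by
    rw [← (posDefCore hH).conj_inner_symm, hgx]
  have key := @InnerProductSpace.Core.inner_mul_inner_self_le ℂ (ι → ℂ) _ _ _
    (posDefCore hH).toCore g x
  have key' : ‖star g ⬝ᵥ H *ᵥ x‖ * ‖star x ⬝ᵥ H *ᵥ g‖
      ≤ (star g ⬝ᵥ H *ᵥ g).re * (star x ⬝ᵥ H *ᵥ x).re := key
  rw [show star g ⬝ᵥ H *ᵥ x = (posDefCore hH).inner g x from rfl,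
    show star x ⬝ᵥ H *ᵥ g = (posDefCore hH).inner x g from rfl,
    show star g ⬝ᵥ H *ᵥ g = (posDefCore hH).inner g g from rfl,
    hgx, hxg, hgg] at key'
  calc Complex.normSq (star w ⬝ᵥ x)
      = ‖star w ⬝ᵥ x‖ * ‖(starRingEnd ℂ) (star w ⬝ᵥ x)‖ := by
        rw [RCLike.norm_conj, ← Complex.sq_norm]
        ring
    _ ≤ (star w ⬝ᵥ H⁻¹ *ᵥ w).re * (star x ⬝ᵥ H *ᵥ x).re := key'
lemma vecMulVec_mulVec' {κ : Type*} [Fintype κ] (a : κ → ℂ) (b : κ → ℂ) (c : κ → ℂ) :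
    Matrix.vecMulVec a b *ᵥ c = (b ⬝ᵥ c) • a := by
  funext i
  simp only [Matrix.mulVec, dotProduct, Matrix.vecMulVec_apply, Pi.smul_apply,
    smul_eq_mul, Finset.mul_sum, Finset.sum_mul]
  exact Finset.sum_congr rfl fun j _ => by ring

lemma quad_block {r : ℕ} (G : Matrix (Fin r) (Fin r) ℂ) (u v : Fin r → ℂ) (χ : ℝ)
    (x : (Fin r ⊕ Fin r) → ℂ) :
    (star x ⬝ᵥ (Matrix.fromBlocks G ((χ:ℂ) • Matrix.vecMulVec v (star u))
      ((χ:ℂ) • Matrix.vecMulVec u (star v)) G) *ᵥ x).re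
    = -(star (x ∘ Sum.inl) ⬝ᵥ (-G) *ᵥ (x ∘ Sum.inl)).re
      - (star (x ∘ Sum.inr) ⬝ᵥ (-G) *ᵥ (x ∘ Sum.inr)).re
      + 2 * χ * ((starRingEnd ℂ) (star v ⬝ᵥ (x ∘ Sum.inl)) * (star u ⬝ᵥ (x ∘ Sum.inr))).re := by
  set x₁ : Fin r → ℂ := x ∘ Sum.inl with hx₁
  set x₂ : Fin r → ℂ := x ∘ Sum.inr with hx₂
  have hx : x = Sum.elim x₁ x₂ := by funext i; cases i <;> rfl
  have h1 : star x ⬝ᵥ (Matrix.fromBlocks G ((χ:ℂ) • Matrix.vecMulVec v (star u))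
      ((χ:ℂ) • Matrix.vecMulVec u (star v)) G) *ᵥ x
      = (star x₁ ⬝ᵥ G *ᵥ x₁) + (star x₂ ⬝ᵥ G *ᵥ x₂)
        + (χ:ℂ) * ((star u ⬝ᵥ x₂) * (star x₁ ⬝ᵥ v))
        + (χ:ℂ) * ((star v ⬝ᵥ x₁) * (star x₂ ⬝ᵥ u)) := by
    conv_lhs => rw [hx]
    rw [Function.star_sumElim, Matrix.fromBlocks_mulVec, sumElim_dotProduct_sumElim]
    simp only [Sum.elim_comp_inl, Sum.elim_comp_inr]
    rw [Matrix.smul_mulVec, Matrix.smul_mulVec, vecMulVec_mulVec', vecMulVec_mulVec',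
      dotProduct_add, dotProduct_add, dotProduct_smul, dotProduct_smul,
      dotProduct_smul, dotProduct_smul]
    simp only [smul_eq_mul]
    ring
  have hc1 : star x₁ ⬝ᵥ v = (starRingEnd ℂ) (star v ⬝ᵥ x₁) := by
    rw [Matrix.star_dotProduct, starRingEnd_apply]
  have hc2 : star x₂ ⬝ᵥ u = (starRingEnd ℂ) (star u ⬝ᵥ x₂) := by
    rw [Matrix.star_dotProduct, starRingEnd_apply]
  rw [h1, hc1, hc2]
  set c₁ := star v ⬝ᵥ x₁
  set c₂ := star u ⬝ᵥ x₂
  have e1 : star x₁ ⬝ᵥ G *ᵥ x₁ = -(star x₁ ⬝ᵥ (-G) *ᵥ x₁) := by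
    rw [Matrix.neg_mulVec, dotProduct_neg, neg_neg]
  have e2 : star x₂ ⬝ᵥ G *ᵥ x₂ = -(star x₂ ⬝ᵥ (-G) *ᵥ x₂) := by
    rw [Matrix.neg_mulVec, dotProduct_neg, neg_neg]
  rw [e1, e2]
  have e3 : (χ:ℂ) * (c₂ * (starRingEnd ℂ) c₁) + (χ:ℂ) * (c₁ * (starRingEnd ℂ) c₂)
      = ((2 * χ * ((starRingEnd ℂ) c₁ * c₂).re : ℝ) : ℂ) := by
    have hz := Complex.add_conj ((starRingEnd ℂ) c₁ * c₂)
    have : (χ:ℂ) * (c₂ * (starRingEnd ℂ) c₁) + (χ:ℂ) * (c₁ * (starRingEnd ℂ) c₂)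
        = (χ:ℂ) * ((starRingEnd ℂ) c₁ * c₂ + (starRingEnd ℂ) ((starRingEnd ℂ) c₁ * c₂)) := by
      rw [_root_.map_mul, Complex.conj_conj]
      ring
    rw [this, hz]
    push_cast
    ring
  calc (-(star x₁ ⬝ᵥ (-G) *ᵥ x₁) + -(star x₂ ⬝ᵥ (-G) *ᵥ x₂)
        + (χ:ℂ) * (c₂ * (starRingEnd ℂ) c₁) + (χ:ℂ) * (c₁ * (starRingEnd ℂ) c₂)).re
      = (-(star x₁ ⬝ᵥ (-G) *ᵥ x₁)).re + (-(star x₂ ⬝ᵥ (-G) *ᵥ x₂)).re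
        + ((χ:ℂ) * (c₂ * (starRingEnd ℂ) c₁) + (χ:ℂ) * (c₁ * (starRingEnd ℂ) c₂)).re := by
        rw [add_assoc, Complex.add_re, Complex.add_re]
    _ = -(star x₁ ⬝ᵥ (-G) *ᵥ x₁).re - (star x₂ ⬝ᵥ (-G) *ᵥ x₂).re
        + 2 * χ * ((starRingEnd ℂ) c₁ * c₂).re := by
        rw [e3, Complex.neg_re, Complex.neg_re, Complex.ofReal_re]
        ring

end Stmt10Aux

/-- Let `G` be an `r×r` Hermitian negative definite complex matrix, `u, v`
unit vectors in `ℂ^r`, `χ > 0`, and `M = [[G, χ·v·uᴴ], [χ·u·vᴴ, G]]`. If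
`χ²·(uᴴG⁻¹u)·(vᴴG⁻¹v) ≥ 1` then `M` has exactly `2r−1` strictly negative eigenvalues (with
multiplicity); if `χ²·(uᴴG⁻¹u)·(vᴴG⁻¹v) < 1` then `M` has exactly `2r` strictly negative
eigenvalues. (The quantities `uᴴG⁻¹u`, `vᴴG⁻¹v` are real since `G` is Hermitian, so the
comparison is stated on the real part.) -/
theorem stmt10 (r : ℕ) (hr : 1 ≤ r)
    (G : Matrix (Fin r) (Fin r) ℂ) (hG : (-G).PosDef)
    (u v : Fin r → ℂ)
    (hu : dotProduct (star u) u = 1) (hv : dotProduct (star v) v = 1)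
    (χ : ℝ) (hχ : 0 < χ)
    (M : Matrix (Fin r ⊕ Fin r) (Fin r ⊕ Fin r) ℂ)
    (hMdef : M = Matrix.fromBlocks G ((χ : ℂ) • Matrix.vecMulVec v (star u))
      ((χ : ℂ) • Matrix.vecMulVec u (star v)) G)
    (hM : M.IsHermitian) :
    ((1 : ℝ) ≤ ((χ : ℂ) ^ 2 * dotProduct (star u) (G⁻¹.mulVec u) *
          dotProduct (star v) (G⁻¹.mulVec v)).re →
      (Finset.univ.filter fun i => hM.eigenvalues i < 0).card = 2 * r - 1) ∧
    (((χ : ℂ) ^ 2 * dotProduct (star u) (G⁻¹.mulVec u) *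
          dotProduct (star v) (G⁻¹.mulVec v)).re < 1 →
      (Finset.univ.filter fun i => hM.eigenvalues i < 0).card = 2 * r) := by
  subst hMdef
  classical
  have hu0 : u ≠ 0 := by rintro rfl; simp at hu
  have hv0 : v ≠ 0 := by rintro rfl; simp at hv
  have hdetH : IsUnit (-G).det := (Matrix.isUnit_iff_isUnit_det _).mp hG.isUnit
  set P : ℝ := (star v ⬝ᵥ (-G)⁻¹ *ᵥ v).re with hPdef
  set Qu : ℝ := (star u ⬝ᵥ (-G)⁻¹ *ᵥ u).re with hQdef
  have hPpos : 0 < P := hG.inv.re_dotProduct_pos hv0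
  have hQpos : 0 < Qu := hG.inv.re_dotProduct_pos hu0
  have hPc : star v ⬝ᵥ (-G)⁻¹ *ᵥ v = (P : ℂ) := by
    have h0 := hG.inv.dotProduct_mulVec_pos hv0
    rw [Complex.lt_def] at h0
    exact Complex.ext (by rw [Complex.ofReal_re]) (by rw [Complex.ofReal_im, ← h0.2]; rfl)
  have hQc : star u ⬝ᵥ (-G)⁻¹ *ᵥ u = (Qu : ℂ) := by
    have h0 := hG.inv.dotProduct_mulVec_pos hu0
    rw [Complex.lt_def] at h0
    exact Complex.ext (by rw [Complex.ofReal_re]) (by rw [Complex.ofReal_im, ← h0.2]; rfl)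
  have hGinv : G⁻¹ = -((-G)⁻¹) := by
    apply Matrix.inv_eq_left_inv
    rw [neg_mul, ← Matrix.mul_neg, Matrix.nonsing_inv_mul _ hdetH]
  have hcond_re : ((χ : ℂ) ^ 2 * dotProduct (star u) (G⁻¹.mulVec u) *
          dotProduct (star v) (G⁻¹.mulVec v)).re = χ ^ 2 * Qu * P := by
    show ((χ : ℂ) ^ 2 * (star u ⬝ᵥ G⁻¹ *ᵥ u) * (star v ⬝ᵥ G⁻¹ *ᵥ v)).re = _
    rw [hGinv, Matrix.neg_mulVec, dotProduct_neg, Matrix.neg_mulVec,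
      dotProduct_neg, hPc, hQc]
    have : (χ : ℂ) ^ 2 * (-(Qu : ℂ)) * (-(P : ℂ)) = ((χ ^ 2 * Qu * P : ℝ) : ℂ) := by
      push_cast; ring
    rw [this, Complex.ofReal_re]
  have hcard : Fintype.card (Fin r ⊕ Fin r) = r + r := by simp
  have hQform := fun x => Stmt10Aux.quad_block G u v χ x
  have hs_nonneg : ∀ z : Fin r → ℂ, 0 ≤ (star z ⬝ᵥ (-G) *ᵥ z).re := fun z =>
    hG.posSemidef.re_dotProduct_nonneg z
  have hs_pos : ∀ z : Fin r → ℂ, z ≠ 0 → 0 < (star z ⬝ᵥ (-G) *ᵥ z).re := fun z hz =>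
    hG.re_dotProduct_pos hz
  have hsplitx : ∀ x : (Fin r ⊕ Fin r) → ℂ, x ≠ 0 →
      x ∘ Sum.inl ≠ 0 ∨ x ∘ Sum.inr ≠ 0 := by
    intro x hx0
    by_contra h
    push_neg at h
    apply hx0
    funext i
    cases i with
    | inl a => exact congrFun h.1 a
    | inr a => exact congrFun h.2 a
  constructor
  · -- `≥` case : 2r - 1 negative eigenvalues
    intro h1
    rw [hcond_re] at h1
    -- the hyperplane
    set φ : ((Fin r ⊕ Fin r) → ℂ) →ₗ[ℂ] ℂ :=
      { toFun := fun x => star u ⬝ᵥ (x ∘ Sum.inr)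
        map_add' := fun a b => by
          simp [dotProduct, Function.comp, mul_add, Finset.sum_add_distrib]
        map_smul' := fun c a => by
          simp only [dotProduct, Function.comp, Pi.smul_apply, smul_eq_mul,
            RingHom.id_apply, Finset.mul_sum]
          exact Finset.sum_congr rfl fun j _ => by ring } with hφdef
    have hφx : φ (Sum.elim 0 u) = 1 := hu
    have hsurj : Function.Surjective φ := fun c =>
      ⟨c • Sum.elim (0 : Fin r → ℂ) u, by rw [_root_.map_smul, hφx, smul_eq_mul, mul_one]⟩
    have hkerrank : Module.finrank ℂ (LinearMap.ker φ) = r + r - 1 := by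
      have h := LinearMap.finrank_range_add_finrank_ker φ
      rw [LinearMap.range_eq_top.mpr hsurj, finrank_top, Module.finrank_self,
        Module.finrank_fintype_fun_eq_card, hcard] at h
      omega
    have hW : ∀ x ∈ LinearMap.ker φ, x ≠ 0 →
        (star x ⬝ᵥ (Matrix.fromBlocks G ((χ : ℂ) • Matrix.vecMulVec v (star u))
          ((χ : ℂ) • Matrix.vecMulVec u (star v)) G) *ᵥ x).re < 0 := by
      intro x hx hx0
      have hc2 : star u ⬝ᵥ (x ∘ Sum.inr) = 0 := LinearMap.mem_ker.mp hx
      rw [hQform x, hc2, mul_zero, Complex.zero_re, mul_zero, add_zero]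
      rcases hsplitx x hx0 with h | h
      · have := hs_pos _ h
        have := hs_nonneg (x ∘ Sum.inr)
        linarith
      · have := hs_pos _ h
        have := hs_nonneg (x ∘ Sum.inl)
        linarith
    -- the positive direction
    set x₀ : (Fin r ⊕ Fin r) → ℂ :=
      Sum.elim ((Real.sqrt Qu : ℂ) • ((-G)⁻¹ *ᵥ v)) ((Real.sqrt P : ℂ) • ((-G)⁻¹ *ᵥ u))
      with hx₀def
    have hx₀l : x₀ ∘ Sum.inl = (Real.sqrt Qu : ℂ) • ((-G)⁻¹ *ᵥ v) := rfl
    have hx₀r : x₀ ∘ Sum.inr = (Real.sqrt P : ℂ) • ((-G)⁻¹ *ᵥ u) := rfl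
    have hc₁₀ : star v ⬝ᵥ (x₀ ∘ Sum.inl) = (Real.sqrt Qu : ℂ) * (P : ℂ) := by
      rw [hx₀l, dotProduct_smul, hPc, smul_eq_mul]
    have hc₂₀ : star u ⬝ᵥ (x₀ ∘ Sum.inr) = (Real.sqrt P : ℂ) * (Qu : ℂ) := by
      rw [hx₀r, dotProduct_smul, hQc, smul_eq_mul]
    have hmulv : (-G) *ᵥ ((-G)⁻¹ *ᵥ v) = v := by
      rw [Matrix.mulVec_mulVec, Matrix.mul_nonsing_inv _ hdetH, Matrix.one_mulVec]
    have hmulu : (-G) *ᵥ ((-G)⁻¹ *ᵥ u) = u := by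
      rw [Matrix.mulVec_mulVec, Matrix.mul_nonsing_inv _ hdetH, Matrix.one_mulVec]
    have hsv : star ((-G)⁻¹ *ᵥ v) ⬝ᵥ v = (P : ℂ) := by
      rw [Matrix.star_dotProduct, hPc, Complex.star_def, Complex.conj_ofReal]
    have hsu : star ((-G)⁻¹ *ᵥ u) ⬝ᵥ u = (Qu : ℂ) := by
      rw [Matrix.star_dotProduct, hQc, Complex.star_def, Complex.conj_ofReal]
    have hsqQ : Real.sqrt Qu ^ 2 = Qu := Real.sq_sqrt hQpos.le
    have hsqP : Real.sqrt P ^ 2 = P := Real.sq_sqrt hPpos.le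
    have hs₁₀ : (star (x₀ ∘ Sum.inl) ⬝ᵥ (-G) *ᵥ (x₀ ∘ Sum.inl)).re = Qu * P := by
      rw [hx₀l, star_smul, Matrix.mulVec_smul, smul_dotProduct, dotProduct_smul,
        hmulv, hsv, smul_eq_mul, smul_eq_mul, Complex.star_def, Complex.conj_ofReal]
      have : (Real.sqrt Qu : ℂ) * ((Real.sqrt Qu : ℂ) * (P : ℂ))
          = ((Real.sqrt Qu ^ 2 * P : ℝ) : ℂ) := by push_cast; ring
      rw [this, Complex.ofReal_re, hsqQ]
    have hs₂₀ : (star (x₀ ∘ Sum.inr) ⬝ᵥ (-G) *ᵥ (x₀ ∘ Sum.inr)).re = P * Qu := by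
      rw [hx₀r, star_smul, Matrix.mulVec_smul, smul_dotProduct, dotProduct_smul,
        hmulu, hsu, smul_eq_mul, smul_eq_mul, Complex.star_def, Complex.conj_ofReal]
      have : (Real.sqrt P : ℂ) * ((Real.sqrt P : ℂ) * (Qu : ℂ))
          = ((Real.sqrt P ^ 2 * Qu : ℝ) : ℂ) := by push_cast; ring
      rw [this, Complex.ofReal_re, hsqP]
    have hQx₀ : 0 ≤ (star x₀ ⬝ᵥ (Matrix.fromBlocks G ((χ : ℂ) • Matrix.vecMulVec v (star u))
        ((χ : ℂ) • Matrix.vecMulVec u (star v)) G) *ᵥ x₀).re := by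
      rw [hQform x₀, hc₁₀, hc₂₀, hs₁₀, hs₂₀]
      have hcross : ((starRingEnd ℂ) ((Real.sqrt Qu : ℂ) * (P : ℂ))
          * ((Real.sqrt P : ℂ) * (Qu : ℂ))).re
          = Real.sqrt Qu * P * (Real.sqrt P * Qu) := by
        have : (starRingEnd ℂ) ((Real.sqrt Qu : ℂ) * (P : ℂ)) * ((Real.sqrt P : ℂ) * (Qu : ℂ))
            = ((Real.sqrt Qu * P * (Real.sqrt P * Qu) : ℝ) : ℂ) := by
          rw [← Complex.ofReal_mul, Complex.conj_ofReal, ← Complex.ofReal_mul,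
            ← Complex.ofReal_mul]
        rw [this, Complex.ofReal_re]
      rw [hcross]
      have ht2 : (χ * (Real.sqrt Qu * Real.sqrt P)) ^ 2 = χ ^ 2 * Qu * P := by
        rw [mul_pow, mul_pow, hsqQ, hsqP]
        ring
      have htnn : 0 ≤ χ * (Real.sqrt Qu * Real.sqrt P) := by positivity
      have ht : 1 ≤ χ * (Real.sqrt Qu * Real.sqrt P) := by nlinarith [ht2, h1, htnn]
      have hPQ : 0 < P * Qu := mul_pos hPpos hQpos
      have h13 : 1 * (P * Qu) ≤ (χ * (Real.sqrt Qu * Real.sqrt P)) * (P * Qu) :=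
        mul_le_mul_of_nonneg_right ht hPQ.le
      nlinarith [h13]
    have hx₀ne : x₀ ≠ 0 := by
      intro h
      have h2 : star v ⬝ᵥ (x₀ ∘ Sum.inl) = 0 := by
        rw [h]
        simp [Function.comp]
      rw [hc₁₀] at h2
      exact (mul_ne_zero (Complex.ofReal_ne_zero.mpr (Real.sqrt_pos.mpr hQpos).ne')
        (Complex.ofReal_ne_zero.mpr hPpos.ne')) h2
    have hVr : Module.finrank ℂ (ℂ ∙ x₀) = Fintype.card (Fin r ⊕ Fin r) - (r + r - 1) := by
      rw [finrank_span_singleton hx₀ne, hcard]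
      omega
    have hV : ∀ x ∈ (ℂ ∙ x₀), 0 ≤
        (star x ⬝ᵥ (Matrix.fromBlocks G ((χ : ℂ) • Matrix.vecMulVec v (star u))
          ((χ : ℂ) • Matrix.vecMulVec u (star v)) G) *ᵥ x).re := by
      intro x hx
      obtain ⟨c, rfl⟩ := Submodule.mem_span_singleton.mp hx
      set A := Matrix.fromBlocks G ((χ : ℂ) • Matrix.vecMulVec v (star u))
        ((χ : ℂ) • Matrix.vecMulVec u (star v)) G
      have : star (c • x₀) ⬝ᵥ A *ᵥ (c • x₀)
          = ((Complex.normSq c : ℝ) : ℂ) * (star x₀ ⬝ᵥ A *ᵥ x₀) := by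
        rw [Matrix.mulVec_smul, dotProduct_smul, star_smul, smul_dotProduct,
          smul_eq_mul, smul_eq_mul, ← mul_assoc]
        congr 1
        rw [Complex.star_def, Complex.mul_conj]
      rw [this, Complex.re_ofReal_mul]
      exact mul_nonneg (Complex.normSq_nonneg c) hQx₀
    have := Stmt10Aux.count_eigen _ hM (r + r - 1) (LinearMap.ker φ) (ℂ ∙ x₀)
      hkerrank hVr (by rw [hcard]; omega) hW hV
    rw [this]
    omega
  · -- `<` case : negative definite, 2r negative eigenvalues
    intro h2
    rw [hcond_re] at h2
    have hneg : ∀ x : (Fin r ⊕ Fin r) → ℂ, x ≠ 0 →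
        (star x ⬝ᵥ (Matrix.fromBlocks G ((χ : ℂ) • Matrix.vecMulVec v (star u))
          ((χ : ℂ) • Matrix.vecMulVec u (star v)) G) *ᵥ x).re < 0 := by
      intro x hx0
      rw [hQform x]
      set x₁ := x ∘ Sum.inl with hx₁def
      set x₂ := x ∘ Sum.inr with hx₂def
      set c₁ := star v ⬝ᵥ x₁ with hc₁def
      set c₂ := star u ⬝ᵥ x₂ with hc₂def
      set s₁ := (star x₁ ⬝ᵥ (-G) *ᵥ x₁).re with hs₁def
      set s₂ := (star x₂ ⬝ᵥ (-G) *ᵥ x₂).re with hs₂def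
      have hs₁0 : 0 ≤ s₁ := hs_nonneg x₁
      have hs₂0 : 0 ≤ s₂ := hs_nonneg x₂
      have hspos : 0 < s₁ + s₂ := by
        rcases hsplitx x hx0 with h | h
        · have := hs_pos _ h; rw [← hx₁def, ← hs₁def] at this; linarith
        · have := hs_pos _ h; rw [← hx₂def, ← hs₂def] at this; linarith
      have hcs1 : Complex.normSq c₁ ≤ P * s₁ := Stmt10Aux.cauchySchwarz hG v x₁
      have hcs2 : Complex.normSq c₂ ≤ Qu * s₂ := Stmt10Aux.cauchySchwarz hG u x₂
      have hred : ((starRingEnd ℂ) c₁ * c₂).re ≤ ‖c₁‖ * ‖c₂‖ := by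
        calc ((starRingEnd ℂ) c₁ * c₂).re ≤ ‖(starRingEnd ℂ) c₁ * c₂‖ :=
              Complex.re_le_norm _
          _ = ‖c₁‖ * ‖c₂‖ := by rw [norm_mul, Complex.norm_conj]
      have ha2 : ‖c₁‖ ^ 2 ≤ P * s₁ := by rw [Complex.sq_norm]; exact hcs1
      have hb2 : ‖c₂‖ ^ 2 ≤ Qu * s₂ := by rw [Complex.sq_norm]; exact hcs2
      by_cases hc₁0 : c₁ = 0
      · rw [hc₁0]
        simp only [map_zero, zero_mul, Complex.zero_re, mul_zero]
        linarith
      by_cases hc₂0 : c₂ = 0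
      · rw [hc₂0]
        simp only [mul_zero, Complex.zero_re]
        linarith
      have ha : 0 < ‖c₁‖ := norm_pos_iff.mpr hc₁0
      have hb : 0 < ‖c₂‖ := norm_pos_iff.mpr hc₂0
      have hs₁p : 0 < s₁ := by nlinarith
      have hs₂p : 0 < s₂ := by nlinarith
      set a := ‖c₁‖
      set b := ‖c₂‖
      have h7 : a ^ 2 * b ^ 2 ≤ (P * s₁) * (Qu * s₂) :=
        mul_le_mul ha2 hb2 (sq_nonneg b) (by positivity)
      have h7' : (4 * χ ^ 2) * (a ^ 2 * b ^ 2) ≤ (4 * χ ^ 2) * ((P * s₁) * (Qu * s₂)) :=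
        mul_le_mul_of_nonneg_left h7 (by positivity)
      have h8 : (χ ^ 2 * Qu * P) * (4 * (s₁ * s₂)) < 1 * (4 * (s₁ * s₂)) :=
        mul_lt_mul_of_pos_right h2 (by positivity)
      have h9 : 4 * (s₁ * s₂) ≤ (s₁ + s₂) ^ 2 := by nlinarith [sq_nonneg (s₁ - s₂)]
      have h10 : (2 * χ * (a * b)) ^ 2 < (s₁ + s₂) ^ 2 := by nlinarith
      have h11 : 2 * χ * (a * b) < s₁ + s₂ := lt_of_pow_lt_pow_left₀ 2 (by positivity) h10
      have h12 : 2 * χ * ((starRingEnd ℂ) c₁ * c₂).re ≤ 2 * χ * (a * b) :=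
        mul_le_mul_of_nonneg_left hred (by positivity)
      linarith
    have hWr : Module.finrank ℂ (⊤ : Submodule ℂ ((Fin r ⊕ Fin r) → ℂ)) = r + r := by
      rw [finrank_top, Module.finrank_fintype_fun_eq_card, hcard]
    have hVr : Module.finrank ℂ (⊥ : Submodule ℂ ((Fin r ⊕ Fin r) → ℂ))
        = Fintype.card (Fin r ⊕ Fin r) - (r + r) := by
      rw [finrank_bot, hcard]
      omega
    have := Stmt10Aux.count_eigen _ hM (r + r)
      (⊤ : Submodule ℂ ((Fin r ⊕ Fin r) → ℂ)) (⊥ : Submodule ℂ ((Fin r ⊕ Fin r) → ℂ))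
      hWr hVr (by rw [hcard]) (fun x _ hx0 => hneg x hx0)
      (by
        intro x hx
        rw [Submodule.mem_bot] at hx
        subst hx
        simp)
    rw [this]
    omega
end

section
/- Let N ≥ 1, let P and Q be N×N complex matrices satisfying P = Pᴴ, P² = P, Q = Qᴴ and Q² = Q, and let w ∈ ℂ with w ∉ [0, ∞). Then P·Q − wI and P·Q·P − wI are both invertible, (P·Q − wI)⁻¹·P = (P·Q·P − wI)⁻¹·P, and the spectral norm of (P·Q − wI)⁻¹·P is at most 1/dist(w, [0,∞)), where dist(w,[0,∞)) is the distance from w to the nonnegative real axis. -/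
open Matrix
open scoped Pointwise

set_option maxHeartbeats 1000000
set_option synthInstance.maxHeartbeats 1000000

/-- Let `P, Q` be `N×N` orthogonal projection matrices and `w ∈ ℂ` with
`w ∉ [0, ∞)`. Then `P·Q − w·1` and `P·Q·P − w·1` are invertible,
`(P·Q − w·1)⁻¹·P = (P·Q·P − w·1)⁻¹·P`, and the spectral norm of `(P·Q − w·1)⁻¹·P` is at most
`1 / dist(w, [0, ∞))`. -/
theorem stmt13 (N : ℕ) (hN : 1 ≤ N) (P Q : Matrix (Fin N) (Fin N) ℂ)
    (hP : Pᴴ = P) (hP2 : P * P = P) (hQ : Qᴴ = Q) (hQ2 : Q * Q = Q)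
    (w : ℂ) (hw : ∀ x : ℝ, 0 ≤ x → (x : ℂ) ≠ w) :
    IsUnit (P * Q - w • (1 : Matrix (Fin N) (Fin N) ℂ)) ∧
    IsUnit (P * Q * P - w • (1 : Matrix (Fin N) (Fin N) ℂ)) ∧
    (P * Q - w • 1)⁻¹ * P = (P * Q * P - w • 1)⁻¹ * P ∧
    ‖Matrix.toEuclideanCLM (𝕜 := ℂ) ((P * Q - w • 1)⁻¹ * P)‖ ≤
      1 / Metric.infDist w (Complex.ofReal '' Set.Ici (0 : ℝ)) := by
  haveI : Nonempty (Fin N) := ⟨⟨0, hN⟩⟩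
  classical
  set S : Set ℂ := Complex.ofReal '' Set.Ici (0 : ℝ) with hSdef
  have hSclosed : IsClosed S :=
    Complex.isometry_ofReal.isClosedEmbedding.isClosedMap _ isClosed_Ici
  have hSne : S.Nonempty := ⟨0, ⟨0, Set.mem_Ici.mpr le_rfl, by simp⟩⟩
  have hwS : w ∉ S := by rintro ⟨x, hx, rfl⟩; exact hw x hx rfl
  have hd : 0 < Metric.infDist w S := (hSclosed.notMem_iff_infDist_pos hSne).mp hwS
  set f := Matrix.toEuclideanCLM (𝕜 := ℂ) (n := Fin N) with hfdef
  set H : Matrix (Fin N) (Fin N) ℂ := P * Q * P with hHdef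
  have hHsa : Hᴴ = H := by
    simp only [hHdef, conjTranspose_mul, hP, hQ, mul_assoc]
  -- f H is selfadjoint and nonneg
  have hsa : _root_.IsSelfAdjoint (f H) := by
    refine (_root_.isSelfAdjoint_iff).mpr ?_
    rw [← map_star]
    congr 1
  have hHform : H = (Q * P)ᴴ * (Q * P) := by
    rw [conjTranspose_mul, hP, hQ, hHdef, ← mul_assoc, mul_assoc P Q Q, hQ2]
  have hnn : (0 : EuclideanSpace ℂ (Fin N) →L[ℂ] EuclideanSpace ℂ (Fin N)) ≤ f H := by
    rw [hHform, _root_.map_mul]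
    have h1 : f ((Q * P)ᴴ) = star (f (Q * P)) := by
      rw [← map_star]
      congr 1
    rw [h1]
    exact star_mul_self_nonneg _
  -- spectrum of f H is contained in S
  have hspec : ∀ z ∈ spectrum ℂ (f H), z ∈ S := by
    intro z hz
    have hz1 : z = z.re := hsa.mem_spectrum_eq_re hz
    have hz2 : (z.re : ℂ) ∈ spectrum ℂ (f H) := by rw [← hz1]; exact hz
    have hz3 : z.re ∈ spectrum ℝ (f H) := by
      rw [← spectrum.algebraMap_mem_iff ℂ]
      exact hz2
    have : (0 : ℝ) ≤ z.re := spectrum_nonneg_of_nonneg hnn hz3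
    exact ⟨z.re, this, hz1.symm⟩
  have hwH : w ∉ spectrum ℂ (f H) := fun h => hwS (hspec w h)
  -- transfer of IsUnit along f
  have unit_iff : ∀ X : Matrix (Fin N) (Fin N) ℂ, IsUnit (f X) ↔ IsUnit X := by
    intro X
    constructor
    · intro h
      have := h.map (Matrix.toEuclideanCLM (𝕜 := ℂ) (n := Fin N)).symm
      simpa [hfdef] using this
    · exact fun h => h.map f
  have hfB : f (H - w • 1) = f H - w • 1 := by
    simp only [map_sub]
    congr 1
    rw [_root_.map_smul, _root_.map_one]
  -- invertibility of B
  have hBunit : IsUnit (H - w • (1 : Matrix (Fin N) (Fin N) ℂ)) := by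
    rw [← unit_iff, hfB]
    have h1 := spectrum.notMem_iff.mp hwH
    rw [Algebra.algebraMap_eq_smul_one] at h1
    simpa [neg_sub] using h1.neg
  -- spectrum swap
  have hwA : w ∉ spectrum ℂ (f (P * Q)) := by
    intro hmem
    have hw0 : w ≠ 0 := fun h => hw 0 le_rfl (by simp [h])
    have h1 : f (P * Q) * f P = f H := by
      rw [← _root_.map_mul, hHdef]
    have h2 : f P * f (P * Q) = f (P * Q) := by
      rw [← _root_.map_mul, ← mul_assoc, hP2]
    have hswap := spectrum.nonzero_mul_comm (𝕜 := ℂ) (f (P * Q)) (f P)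
    rw [h1, h2] at hswap
    have : w ∈ spectrum ℂ (f H) \ {0} := by
      rw [hswap]
      exact ⟨hmem, hw0⟩
    exact hwH this.1
  have hfA : f (P * Q - w • 1) = f (P * Q) - w • 1 := by
    simp only [map_sub]
    congr 1
    rw [_root_.map_smul, _root_.map_one]
  have hAunit : IsUnit (P * Q - w • (1 : Matrix (Fin N) (Fin N) ℂ)) := by
    rw [← unit_iff, hfA]
    have h1 := spectrum.notMem_iff.mp hwA
    rw [Algebra.algebraMap_eq_smul_one] at h1
    simpa [neg_sub] using h1.neg
  have hAdet : IsUnit (P * Q - w • (1 : Matrix (Fin N) (Fin N) ℂ)).det :=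
    (Matrix.isUnit_iff_isUnit_det _).mp hAunit
  have hBdet : IsUnit (H - w • (1 : Matrix (Fin N) (Fin N) ℂ)).det :=
    (Matrix.isUnit_iff_isUnit_det _).mp hBunit
  -- the resolvent identity
  set A : Matrix (Fin N) (Fin N) ℂ := P * Q - w • 1 with hAdef
  set B : Matrix (Fin N) (Fin N) ℂ := H - w • 1 with hBdef
  have hHP : H * P = H := by
    rw [hHdef, mul_assoc (P * Q) P P, hP2]
  have hPH : P * H = H := by
    rw [hHdef, ← mul_assoc, ← mul_assoc, hP2]
  have hABP : A * P = B * P := by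
    rw [hAdef, hBdef, sub_mul, sub_mul, smul_mul_assoc, one_mul, hHP, hHdef]
  have hPB : P * B = B * P := by
    rw [hBdef, mul_sub, sub_mul, hPH, hHP, mul_smul_comm, smul_mul_assoc, mul_one, one_mul]
  have hPBinv : P * B⁻¹ = B⁻¹ * P := by
    calc P * B⁻¹ = B⁻¹ * (B * P) * B⁻¹ := by
          rw [← mul_assoc, nonsing_inv_mul _ hBdet, one_mul]
      _ = B⁻¹ * (P * B) * B⁻¹ := by rw [hPB]
      _ = B⁻¹ * P * (B * B⁻¹) := by simp only [mul_assoc]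
      _ = B⁻¹ * P := by rw [mul_nonsing_inv _ hBdet, mul_one]
  have hkey : A⁻¹ * P = B⁻¹ * P := by
    calc A⁻¹ * P = A⁻¹ * P * (B * B⁻¹) := by rw [mul_nonsing_inv _ hBdet, mul_one]
      _ = A⁻¹ * (P * B) * B⁻¹ := by simp only [mul_assoc]
      _ = A⁻¹ * (B * P) * B⁻¹ := by rw [hPB]
      _ = A⁻¹ * (A * P) * B⁻¹ := by rw [hABP]
      _ = P * B⁻¹ := by rw [← mul_assoc, nonsing_inv_mul _ hAdet, one_mul]
      _ = B⁻¹ * P := hPBinv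
  refine ⟨hAunit, hBunit, hkey, ?_⟩
  rw [hkey]
  -- norm of f P is at most 1
  have hnn1 : (0:ℝ) ≤ 1 / Metric.infDist w S := by positivity
  have hfPnorm : ‖f P‖ ≤ 1 := by
    rcases eq_or_ne (f P) 0 with h | h
    · simp [h]
    · have h1 : star (f P) * f P = f P := by
        rw [← map_star, ← _root_.map_mul]
        congr 1
        rw [Matrix.star_eq_conjTranspose, hP, hP2]
      have h2 : ‖f P‖ * ‖f P‖ = ‖f P‖ := by
        rw [← CStarRing.norm_star_mul_self, h1]
      have h3 : ‖f P‖ ≠ 0 := norm_ne_zero_iff.mpr h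
      nlinarith [norm_nonneg (f P)]
  -- the unit given by f B
  have hBB1 : f B * f B⁻¹ = 1 := by
    rw [← _root_.map_mul, mul_nonsing_inv _ hBdet, _root_.map_one]
  have hB1B : f B⁻¹ * f B = 1 := by
    rw [← _root_.map_mul, nonsing_inv_mul _ hBdet, _root_.map_one]
  set U : (EuclideanSpace ℂ (Fin N) →L[ℂ] EuclideanSpace ℂ (Fin N))ˣ :=
    ⟨f B, f B⁻¹, hBB1, hB1B⟩ with hUdef
  -- star normality of f B⁻¹
  have hBHsa : Bᴴ = H - (star w) • 1 := by
    rw [hBdef, conjTranspose_sub, conjTranspose_smul, conjTranspose_one, hHsa]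
  have hcommB : Commute B Bᴴ := by
    have c1 : Commute H Bᴴ := by
      rw [hBHsa]
      exact (Commute.refl H).sub_right ((Commute.one_right H).smul_right _)
    rw [hBdef]
    exact c1.sub_left ((Commute.one_left Bᴴ).smul_left w)
  have hstarinv : star (f B⁻¹) = f (Bᴴ)⁻¹ := by
    rw [← map_star]
    congr 1
    rw [Matrix.star_eq_conjTranspose, conjTranspose_nonsing_inv]
  haveI hnormal : IsStarNormal (f B⁻¹) := ⟨by
    rw [Commute, SemiconjBy, hstarinv, ← _root_.map_mul, ← _root_.map_mul,
      ← Matrix.mul_inv_rev, ← Matrix.mul_inv_rev, hcommB.eq]⟩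
  -- spectrum bound for f B⁻¹
  have hspecinv : ∀ z ∈ spectrum ℂ (f B⁻¹), ‖z‖ ≤ 1 / Metric.infDist w S := by
    intro z hz
    have hz' : z ∈ spectrum ℂ
        ((U⁻¹ : (EuclideanSpace ℂ (Fin N) →L[ℂ] EuclideanSpace ℂ (Fin N))ˣ) :
          EuclideanSpace ℂ (Fin N) →L[ℂ] EuclideanSpace ℂ (Fin N)) := hz
    have hz0 : z ≠ 0 := spectrum.ne_zero_of_mem_of_unit hz'
    have hzinv : (z⁻¹ : ℂ) ∈ spectrum ℂ (f B) := by
      have h5 := (spectrum.inv_mem_iff (r := Units.mk0 z hz0) (a := U⁻¹)).mp hz'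
      rw [inv_inv] at h5
      simpa only [Units.val_inv_eq_inv_val, Units.val_mk0] using h5
    have hσB : spectrum ℂ (f B) = spectrum ℂ (f H) - ({w} : Set ℂ) := by
      rw [hfB, spectrum.sub_singleton_eq, Algebra.algebraMap_eq_smul_one]
    rw [hσB, Set.mem_sub] at hzinv
    obtain ⟨μ, hμ, ν, hν, hsub⟩ := hzinv
    rw [Set.mem_singleton_iff] at hν
    rw [hν] at hsub
    have hd2 : Metric.infDist w S ≤ ‖z⁻¹‖ := by
      rw [← hsub]
      have h6 : Metric.infDist w S ≤ dist w μ := Metric.infDist_le_dist_of_mem (hspec μ hμ)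
      rw [dist_eq_norm, norm_sub_rev] at h6
      exact h6
    have h7 : ‖z‖ = ‖z⁻¹‖⁻¹ := by rw [norm_inv, inv_inv]
    rw [h7, one_div]
    exact inv_anti₀ hd hd2
  -- spectral radius
  have hradius : ‖f B⁻¹‖ ≤ 1 / Metric.infDist w S := by
    set c : NNReal := ⟨1 / Metric.infDist w S, hnn1⟩ with hc
    have h1 : spectralRadius ℂ (f B⁻¹) ≤ (c : ENNReal) := by
      rw [spectralRadius]
      refine iSup₂_le fun z hz => ?_
      have h8 := hspecinv z hz
      have h9 : ‖z‖₊ ≤ c := by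
        rw [← NNReal.coe_le_coe]
        exact h8
      exact_mod_cast h9
    rw [IsStarNormal.spectralRadius_eq_nnnorm (f B⁻¹)] at h1
    have h10 : ‖f B⁻¹‖₊ ≤ c := by exact_mod_cast h1
    rw [← NNReal.coe_le_coe] at h10
    exact h10
  calc ‖f (B⁻¹ * P)‖ = ‖f B⁻¹ * f P‖ := by rw [_root_.map_mul]
    _ ≤ ‖f B⁻¹‖ * ‖f P‖ := norm_mul_le _ _
    _ ≤ (1 / Metric.infDist w S) * 1 := mul_le_mul hradius hfPnorm (norm_nonneg _) hnn1
    _ = 1 / Metric.infDist w S := mul_one _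
end

section
/- For every real number c with 0 < c < 1, one has ∫₀^{4c(1−c)} √(λ·(4c(1−c) − λ)) / (2π·λ·(1 − λ)) dλ = min(c, 1−c). -/
open Real MeasureTheory Set intervalIntegral

private lemma stmt14_deriv (a s : ℝ) (ha0 : 0 < a) (hs0 : 0 < s) (hs : s ^ 2 = 1 - a)
    (x : ℝ) (hx0 : 0 < x) (hxa : x < a) :
    HasDerivAt (fun l : ℝ =>
      (Real.arcsin (2 * l / a - 1)
        - s * Real.arcsin (((2 - a) * l - a) / (a * (1 - l)))) / (2 * Real.pi)
        + (1 - s) / 4)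
      (Real.sqrt (x * (a - x)) / (2 * Real.pi * x * (1 - x))) x := by
  have ha1 : a < 1 := by nlinarith
  have hx1 : x < 1 := lt_of_lt_of_le hxa ha1.le
  have h1x : (1:ℝ) - x ≠ 0 := by nlinarith
  have hd0 : a * (1 - x) ≠ 0 := by positivity
  have ht0 : 0 < Real.sqrt (x * (a - x)) := Real.sqrt_pos.2 (by nlinarith)
  set t := Real.sqrt (x * (a - x)) with htdef
  have ht : t ^ 2 = x * (a - x) := Real.sq_sqrt (by nlinarith)
  -- first arcsin
  have hA : HasDerivAt (fun l : ℝ => Real.arcsin (2 * l / a - 1))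
      (1 / Real.sqrt (1 - (2 * x / a - 1) ^ 2) * (2 / a)) x := by
    have h1 : HasDerivAt (fun l : ℝ => 2 * l / a - 1) (2 / a) x := by
      simpa using (((hasDerivAt_id x).const_mul 2).div_const a).sub_const 1
    refine (Real.hasDerivAt_arcsin ?_ ?_).comp x h1
    · intro h; rw [sub_eq_iff_eq_add, div_eq_iff ha0.ne'] at h; nlinarith
    · intro h; rw [sub_eq_iff_eq_add, div_eq_iff ha0.ne'] at h; nlinarith
  -- second arcsin
  have hBfrac : HasDerivAt (fun l : ℝ => ((2 - a) * l - a) / (a * (1 - l)))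
      (((2 - a) * (a * (1 - x)) - ((2 - a) * x - a) * (a * (-1))) / (a * (1 - x)) ^ 2) x := by
    have hn : HasDerivAt (fun l : ℝ => (2 - a) * l - a) (2 - a) x := by
      simpa using ((hasDerivAt_id x).const_mul (2 - a)).sub_const a
    have hd : HasDerivAt (fun l : ℝ => a * (1 - l)) (a * (-1)) x := by
      simpa using ((hasDerivAt_id x).const_sub 1).const_mul a
    exact hn.div hd hd0
  have hB : HasDerivAt (fun l : ℝ => Real.arcsin (((2 - a) * l - a) / (a * (1 - l))))
      (1 / Real.sqrt (1 - (((2 - a) * x - a) / (a * (1 - x))) ^ 2) *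
        (((2 - a) * (a * (1 - x)) - ((2 - a) * x - a) * (a * (-1))) / (a * (1 - x)) ^ 2)) x := by
    refine (Real.hasDerivAt_arcsin ?_ ?_).comp x hBfrac
    · intro h; rw [div_eq_iff hd0] at h; nlinarith
    · intro h; rw [div_eq_iff hd0] at h; nlinarith
  -- assemble
  have hF := ((hA.sub (hB.const_mul s)).div_const (2 * Real.pi)).add_const ((1 - s) / 4)
  refine hF.congr_deriv (Eq.symm ?_)
  -- now simplify the sqrt terms
  have e1 : Real.sqrt (1 - (2 * x / a - 1) ^ 2) = 2 * t / a := by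
    rw [show 1 - (2 * x / a - 1) ^ 2 = (2 * t / a) ^ 2 by
      field_simp; nlinarith [ht]]
    exact Real.sqrt_sq (by positivity)
  have e2 : Real.sqrt (1 - (((2 - a) * x - a) / (a * (1 - x))) ^ 2)
      = 2 * s * t / (a * (1 - x)) := by
    rw [show 1 - (((2 - a) * x - a) / (a * (1 - x))) ^ 2 = (2 * s * t / (a * (1 - x))) ^ 2 by
      field_simp; nlinarith [ht, hs]]
    exact Real.sqrt_sq (div_nonneg (by positivity) (by nlinarith))
  rw [e1, e2]
  have hπ := Real.pi_pos
  have h2 : t * t = x * (a - x) := by nlinarith [ht]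
  have hxne : x ≠ 0 := hx0.ne'
  have htne : t ≠ 0 := ht0.ne'
  have hπne : Real.pi ≠ 0 := hπ.ne'
  field_simp
  linear_combination 2 * h2


private lemma stmt14_key (a s : ℝ) (ha0 : 0 < a) (ha1 : a ≤ 1) (hs0 : 0 ≤ s)
    (hs : s ^ 2 = 1 - a) :
    ∫ l in (0:ℝ)..a, Real.sqrt (l * (a - l)) / (2 * Real.pi * l * (1 - l)) = (1 - s) / 2 := by
  have hπ := Real.pi_pos
  rcases eq_or_lt_of_le hs0 with hs0' | hs0'
  · -- s = 0, a = 1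
    have ha : a = 1 := by nlinarith
    subst ha
    set F : ℝ → ℝ := fun l => Real.arcsin (2 * l - 1) / (2 * Real.pi) + 1 / 4 with hF
    have hcont : ContinuousOn F (Icc 0 1) :=
      (((Real.continuous_arcsin.comp (by continuity)).div_const _).add continuous_const).continuousOn
    have hderiv : ∀ x ∈ Ioo (0:ℝ) 1,
        HasDerivAt F (Real.sqrt (x * (1 - x)) / (2 * Real.pi * x * (1 - x))) x := by
      intro x hx
      obtain ⟨hx0, hx1⟩ := hx
      have ht0 : 0 < Real.sqrt (x * (1 - x)) := Real.sqrt_pos.2 (by nlinarith)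
      set t := Real.sqrt (x * (1 - x)) with htdef
      have ht : t ^ 2 = x * (1 - x) := Real.sq_sqrt (by nlinarith)
      have h1 : HasDerivAt (fun l : ℝ => 2 * l - 1) 2 x := by
        simpa using ((hasDerivAt_id x).const_mul 2).sub_const 1
      have hA : HasDerivAt (fun l : ℝ => Real.arcsin (2 * l - 1))
          (1 / Real.sqrt (1 - (2 * x - 1) ^ 2) * 2) x :=
        (Real.hasDerivAt_arcsin (by intro h; nlinarith) (by intro h; nlinarith)).comp x h1
      have hFd := (hA.div_const (2 * Real.pi)).add_const (1 / 4 : ℝ)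
      refine hFd.congr_deriv (Eq.symm ?_)
      have e1 : Real.sqrt (1 - (2 * x - 1) ^ 2) = 2 * t := by
        rw [show 1 - (2 * x - 1) ^ 2 = (2 * t) ^ 2 by nlinarith [ht]]
        exact Real.sqrt_sq (by positivity)
      rw [e1]
      have hxne : x ≠ 0 := hx0.ne'
      have h1x : (1:ℝ) - x ≠ 0 := by nlinarith
      have htne : t ≠ 0 := ht0.ne'
      have hπne : Real.pi ≠ 0 := hπ.ne'
      field_simp
      linear_combination ht
    have hint : IntervalIntegrable
        (fun x => Real.sqrt (x * (1 - x)) / (2 * Real.pi * x * (1 - x))) volume 0 1 := by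
      apply intervalIntegrable_deriv_of_nonneg (g := F)
      · simpa [uIcc_of_le (zero_le_one : (0:ℝ) ≤ 1)] using hcont
      · simpa using hderiv
      · intro x hx
        simp only [min_eq_left zero_le_one, max_eq_right zero_le_one] at hx
        have hx0 : (0:ℝ) < x := by simpa using hx.1
        have hx1 : x < 1 := by simpa using hx.2
        have hd : (0:ℝ) < 2 * Real.pi * x * (1 - x) := by
          have h1 : (0:ℝ) < 2 * Real.pi * x := by positivity
          nlinarith
        exact div_nonneg (Real.sqrt_nonneg _) hd.le
    rw [← hs0']
    rw [intervalIntegral.integral_eq_sub_of_hasDeriv_right_of_le zero_le_one hcont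
      (fun x hx => (hderiv x hx).hasDerivWithinAt) hint]
    have h0 : F 0 = 0 := by
      simp only [hF]
      rw [show 2 * (0:ℝ) - 1 = -1 by ring, Real.arcsin_neg_one]
      field_simp
      ring
    have h1 : F 1 = 1 / 2 := by
      simp only [hF]
      rw [show 2 * (1:ℝ) - 1 = 1 by ring, Real.arcsin_one]
      field_simp
      ring
    rw [h0, h1]
    norm_num
  · -- 0 < s, a < 1
    have ha1' : a < 1 := by nlinarith
    set F : ℝ → ℝ := fun l =>
      (Real.arcsin (2 * l / a - 1)
        - s * Real.arcsin (((2 - a) * l - a) / (a * (1 - l)))) / (2 * Real.pi)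
        + (1 - s) / 4 with hF
    have hcont : ContinuousOn F (Icc 0 a) := by
      have hc2 : ContinuousOn (fun l : ℝ => ((2 - a) * l - a) / (a * (1 - l))) (Icc 0 a) := by
        apply ContinuousOn.div (by fun_prop) (by fun_prop)
        intro x hx
        have hxa : x ≤ a := hx.2
        have : (0:ℝ) < a * (1 - x) := by nlinarith
        exact this.ne'
      exact (((Real.continuous_arcsin.comp (by continuity)).continuousOn.sub
        (continuousOn_const.mul (Real.continuous_arcsin.comp_continuousOn hc2))).div_const
        _).add continuousOn_const
    have hderiv : ∀ x ∈ Ioo (0:ℝ) a,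
        HasDerivAt F (Real.sqrt (x * (a - x)) / (2 * Real.pi * x * (1 - x))) x :=
      fun x hx => stmt14_deriv a s ha0 hs0' hs x hx.1 hx.2
    have hint : IntervalIntegrable
        (fun x => Real.sqrt (x * (a - x)) / (2 * Real.pi * x * (1 - x))) volume 0 a := by
      apply intervalIntegrable_deriv_of_nonneg (g := F)
      · simpa [uIcc_of_le ha0.le] using hcont
      · simpa [min_eq_left ha0.le, max_eq_right ha0.le] using hderiv
      · intro x hx
        simp only [min_eq_left ha0.le, max_eq_right ha0.le] at hx
        obtain ⟨hx0, hxa⟩ := hx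
        have hx1 : x < 1 := lt_trans hxa ha1'
        have hd : (0:ℝ) < 2 * Real.pi * x * (1 - x) := by
          have h1 : (0:ℝ) < 2 * Real.pi * x := by positivity
          nlinarith
        exact div_nonneg (Real.sqrt_nonneg _) hd.le
    rw [intervalIntegral.integral_eq_sub_of_hasDeriv_right_of_le ha0.le hcont
      (fun x hx => (hderiv x hx).hasDerivWithinAt) hint]
    have h0 : F 0 = 0 := by
      simp only [hF]
      rw [show 2 * (0:ℝ) / a - 1 = -1 by ring,
        show ((2 - a) * 0 - a) / (a * (1 - 0)) = -1 by field_simp; ring,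
        Real.arcsin_neg_one]
      field_simp
      ring
    have h1 : F a = (1 - s) / 2 := by
      simp only [hF]
      rw [show 2 * a / a - 1 = 1 by rw [mul_div_assoc, div_self ha0.ne']; norm_num,
        show ((2 - a) * a - a) / (a * (1 - a)) = 1 by
          rw [div_eq_one_iff_eq (by nlinarith)]; ring,
        Real.arcsin_one]
      field_simp
      ring
    rw [h0, h1]
    ring

/-- For every `0 < c < 1`,
`∫₀^{4c(1−c)} √(λ(4c(1−c) − λ)) / (2π λ (1 − λ)) dλ = min(c, 1−c)`. -/
theorem stmt14 (c : ℝ) (hc0 : 0 < c) (hc1 : c < 1) :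
    ∫ l in (0 : ℝ)..(4 * c * (1 - c)),
      Real.sqrt (l * (4 * c * (1 - c) - l)) / (2 * Real.pi * l * (1 - l))
      = min c (1 - c) := by
  have ha0 : 0 < 4 * c * (1 - c) := by nlinarith
  have ha1 : 4 * c * (1 - c) ≤ 1 := by nlinarith [sq_nonneg (2 * c - 1)]
  have hs : |1 - 2 * c| ^ 2 = 1 - 4 * c * (1 - c) := by rw [sq_abs]; ring
  rw [stmt14_key (4 * c * (1 - c)) |1 - 2 * c| ha0 ha1 (abs_nonneg _) hs]
  rcases le_total c (1 - c) with h | h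
  · rw [min_eq_left h, abs_of_nonneg (by linarith)]; ring
  · rw [min_eq_right h, abs_of_nonpos (by linarith)]; ring
end

section
/- Let c ∈ (0,1) with c ≠ 1/2. For x ∈ (4c(1−c), 1) define s(x) = √(x·(x − 4c(1−c))) (the nonnegative real square root), t̃(x) = (x − 2(1−c) + s(x)) / (2(1−x)x), t(x) = (x(2c−1) + s(x)) / (2c(1−x)x), and f(x) = x·( t̃(x) / ((1−c)·t(x)) )². Then t(x) ≠ 0 for all x ∈ (4c(1−c), 1), f is strictly increasing on (4c(1−c), 1), f(x) → c/(1−c) as x decreases to 4c(1−c), and as x increases to 1, f(x) → 1 if c < 1/2 while f(x) → (c/(1−c))² if c > 1/2. -/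
open Filter

/-- Let `c ∈ (0,1)`, `c ≠ 1/2`, and for `x ∈ (4c(1−c), 1)` define
`s(x) = √(x(x − 4c(1−c)))`, `t̃(x) = (x − 2(1−c) + s(x))/(2(1−x)x)`,
`t(x) = (x(2c−1) + s(x))/(2c(1−x)x)`, and `f(x) = x (t̃(x)/((1−c)t(x)))²`. Then `t` does not
vanish on `(4c(1−c), 1)`, `f` is strictly increasing there, `f(x) → c/(1−c)` as
`x ↓ 4c(1−c)`, and as `x ↑ 1`, `f(x) → 1` if `c < 1/2` while `f(x) → (c/(1−c))²` if
`c > 1/2`. -/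
theorem stmt16 (c : ℝ) (hc0 : 0 < c) (hc1 : c < 1) (hc : c ≠ 1 / 2)
    (s ttil t f : ℝ → ℝ)
    (hs : ∀ x, s x = Real.sqrt (x * (x - 4 * c * (1 - c))))
    (httil : ∀ x, ttil x = (x - 2 * (1 - c) + s x) / (2 * (1 - x) * x))
    (ht : ∀ x, t x = (x * (2 * c - 1) + s x) / (2 * c * (1 - x) * x))
    (hf : ∀ x, f x = x * (ttil x / ((1 - c) * t x)) ^ 2) :
    (∀ x ∈ Set.Ioo (4 * c * (1 - c)) 1, t x ≠ 0) ∧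
    StrictMonoOn f (Set.Ioo (4 * c * (1 - c)) 1) ∧
    Tendsto f (nhdsWithin (4 * c * (1 - c)) (Set.Ioi (4 * c * (1 - c)))) (nhds (c / (1 - c))) ∧
    (c < 1 / 2 → Tendsto f (nhdsWithin 1 (Set.Iio 1)) (nhds 1)) ∧
    (1 / 2 < c → Tendsto f (nhdsWithin 1 (Set.Iio 1)) (nhds ((c / (1 - c)) ^ 2))) := by
  have hc1' : 0 < 1 - c := by linarith
  have h2c : 2 * c - 1 ≠ 0 := by intro h; apply hc; linarith
  have h2csq : 0 < (2 * c - 1) ^ 2 := by positivity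
  have ha0 : 0 < 4 * c * (1 - c) := by positivity
  have ha1 : 4 * c * (1 - c) < 1 := by nlinarith
  -- `t` has nonvanishing numerator on the interval
  have hD : ∀ x ∈ Set.Ioo (4 * c * (1 - c)) 1, x * (2 * c - 1) + s x ≠ 0 := by
    intro x hx hzero
    obtain ⟨hxa, hx1⟩ := hx
    have hx0 : 0 < x := lt_trans ha0 hxa
    have hs2 : s x ^ 2 = x * (x - 4 * c * (1 - c)) := by
      rw [hs x]; exact Real.sq_sqrt (by nlinarith)
    have hsx : s x = x * (1 - 2 * c) := by linarith
    have hkey : (x * (1 - 2 * c)) ^ 2 = x * (x - 4 * c * (1 - c)) := by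
      rw [← hsx]; exact hs2
    nlinarith [mul_pos (mul_pos (mul_pos hc0 hc1') hx0)
      (show (0:ℝ) < 1 - x by linarith)]
  -- closed form for `f` on the interval
  have key : ∀ x ∈ Set.Ioo (4 * c * (1 - c)) 1,
      f x = (x - 2 * c * (1 - c) + s x) / (2 * (1 - c) ^ 2) := by
    intro x hx
    obtain ⟨hxa, hx1⟩ := hx
    have hx0 : 0 < x := lt_trans ha0 hxa
    have hx1' : (1 : ℝ) - x ≠ 0 := by linarith
    have hxne : x ≠ 0 := hx0.ne'
    have hcne : c ≠ 0 := hc0.ne'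
    have hc1ne : (1 : ℝ) - c ≠ 0 := hc1'.ne'
    have hs2 : s x ^ 2 = x * (x - 4 * c * (1 - c)) := by
      rw [hs x]; exact Real.sq_sqrt (by nlinarith)
    have hDx := hD x ⟨hxa, hx1⟩
    rw [hf, httil, ht]
    have step1 : (x - 2 * (1 - c) + s x) / (2 * (1 - x) * x) /
        ((1 - c) * ((x * (2 * c - 1) + s x) / (2 * c * (1 - x) * x)))
        = c * (x - 2 * (1 - c) + s x) / ((1 - c) * (x * (2 * c - 1) + s x)) := by
      field_simp
    rw [step1, div_pow, ← mul_div_assoc]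
    have hB : ((1 - c) * (x * (2 * c - 1) + s x)) ^ 2 ≠ 0 :=
      pow_ne_zero 2 (mul_ne_zero hc1ne hDx)
    rw [div_eq_div_iff hB (by positivity)]
    linear_combination ((1 - c) ^ 2 *
      (-(s x) + 2 * x * c ^ 2 + x + 2 * c - 2 * c ^ 2 - 4 * x * c)) * hs2
  -- continuity of the closed form
  have hsc : Continuous fun x : ℝ => Real.sqrt (x * (x - 4 * c * (1 - c))) :=
    Real.continuous_sqrt.comp (by continuity)
  have hgc : Continuous fun x : ℝ =>
      (x - 2 * c * (1 - c) + Real.sqrt (x * (x - 4 * c * (1 - c)))) / (2 * (1 - c) ^ 2) :=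
    ((continuous_id.sub continuous_const).add hsc).div_const _
  have hkey' : ∀ x ∈ Set.Ioo (4 * c * (1 - c)) 1,
      (x - 2 * c * (1 - c) + Real.sqrt (x * (x - 4 * c * (1 - c)))) / (2 * (1 - c) ^ 2)
        = f x := by
    intro x hx
    rw [key x hx, hs x]
  refine ⟨?_, ?_, ?_, ?_, ?_⟩
  · -- t ≠ 0
    intro x hx
    have hDx := hD x hx
    obtain ⟨hxa, hx1⟩ := hx
    have hx0 : 0 < x := lt_trans ha0 hxa
    rw [ht]
    intro h
    apply hDx
    have h1x : (0:ℝ) < 1 - x := by linarith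
    have hden : 2 * c * (1 - x) * x ≠ 0 := by positivity
    exact (div_eq_zero_iff.mp h).resolve_right hden
  · -- strict monotonicity
    intro x hx y hy hxy
    rw [key x hx, key y hy]
    have hsxy : s x ≤ s y := by
      rw [hs x, hs y]
      apply Real.sqrt_le_sqrt
      obtain ⟨hxa, _⟩ := hx
      nlinarith
    have hd : (0:ℝ) < 2 * (1 - c) ^ 2 := by positivity
    rw [div_lt_div_iff₀ hd hd]
    nlinarith
  · -- limit at the left edge
    have hmem : Set.Ioo (4 * c * (1 - c)) 1 ∈
        nhdsWithin (4 * c * (1 - c)) (Set.Ioi (4 * c * (1 - c))) :=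
      Ioo_mem_nhdsGT_of_mem ⟨le_refl _, ha1⟩
    refine Tendsto.congr' (Filter.eventuallyEq_of_mem hmem fun x hx => hkey' x hx) ?_
    have hT := (hgc.tendsto (4 * c * (1 - c))).mono_left
      (nhdsWithin_le_nhds (s := Set.Ioi (4 * c * (1 - c))))
    convert hT using 2
    have : (4 * c * (1 - c)) * (4 * c * (1 - c) - 4 * c * (1 - c)) = 0 := by ring
    rw [this, Real.sqrt_zero]
    field_simp
    ring
  · -- limit at 1 for c < 1/2
    intro hclt
    have hmem : Set.Ioo (4 * c * (1 - c)) 1 ∈ nhdsWithin 1 (Set.Iio 1) :=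
      Ioo_mem_nhdsLT_of_mem ⟨ha1, le_refl _⟩
    refine Tendsto.congr' (Filter.eventuallyEq_of_mem hmem fun x hx => hkey' x hx) ?_
    have hT := (hgc.tendsto 1).mono_left (nhdsWithin_le_nhds (s := Set.Iio 1))
    convert hT using 2
    have h1 : (1:ℝ) * (1 - 4 * c * (1 - c)) = (1 - 2 * c) ^ 2 := by ring
    rw [h1, Real.sqrt_sq (by linarith)]
    field_simp
    ring
  · -- limit at 1 for c > 1/2
    intro hcgt
    have hmem : Set.Ioo (4 * c * (1 - c)) 1 ∈ nhdsWithin 1 (Set.Iio 1) :=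
      Ioo_mem_nhdsLT_of_mem ⟨ha1, le_refl _⟩
    refine Tendsto.congr' (Filter.eventuallyEq_of_mem hmem fun x hx => hkey' x hx) ?_
    have hT := (hgc.tendsto 1).mono_left (nhdsWithin_le_nhds (s := Set.Iio 1))
    convert hT using 2
    have h1 : (1:ℝ) * (1 - 4 * c * (1 - c)) = (2 * c - 1) ^ 2 := by ring
    rw [h1, Real.sqrt_sq (by linarith)]
    field_simp
    ring
end
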